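/- arXiv:2605.17760 — 4 statements merged into one kernel-verified Lean document; each statement's English description precedes it below -/
import Mathlib

section
/- There is an absolute constant c_Ch>0 such that the following holds. Let K=(K⁺,K⁻) be a signed reversible kernel on a finite set U with positive probability measure ν, and assume the operator B given by (Bf)(u)=Σ_v(K⁺(u,v)−K⁻(u,v))f(v) is self-adjoint on L²(ν) with spectrum contained in [0,1]. If β(K) ≥ θ for some θ>0, then ⟨f,(I−B)f⟩_ν ≥ c_Ch·θ²·‖f‖²_{2,ν} for every f:U→ℝ, and consequently ‖B^k f‖_{2,ν} ≤ (1−c_Ch·θ²)^k·‖f‖_{2,ν} for every integer k≥0. -/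
noncomputable section

/-- The `L²(ν)` inner product on a finite set: `⟨f,g⟩_ν = Σ_u ν(u) f(u) g(u)`. -/
def innerNu {U : Type} [Fintype U] (ν f g : U → ℝ) : ℝ := ∑ u, ν u * f u * g u

/-- The signed operator `(Bf)(u) = Σ_v (K⁺(u,v) − K⁻(u,v)) f(v)`. -/
def signedOp {U : Type} [Fintype U] (Kp Km : U → U → ℝ) (f : U → ℝ) : U → ℝ :=
  fun u => ∑ v, (Kp u v - Km u v) * f v

/-- The signed bipartiteness ratio `β_K^ν(S,x)` of a set `S` with a `±1`-signing `x`
(encoded by a Boolean function; the sign `σ = +` penalizes `x(v) ≠ x(u)` and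
`σ = −` penalizes `x(v) = x(u)`). -/
def betaSigned {U : Type} [Fintype U] [DecidableEq U]
    (ν : U → ℝ) (Kp Km : U → U → ℝ) (S : Finset U) (x : U → Bool) : ℝ :=
  (∑ u ∈ S, ν u)⁻¹ *
    ∑ u ∈ S, ν u *
      ((∑ v ∈ Sᶜ, (Kp u v + Km u v)) +
        ∑ v ∈ S, ((if x v ≠ x u then Kp u v else 0) + (if x v = x u then Km u v else 0)))

open Finset in
lemma absSum (x y : ℝ) : |x - y| + 2 * min x y = x + y := by
  rcases le_total x y with h | h
  · rw [abs_of_nonpos (by linarith), min_eq_left h]; ring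
  · rw [abs_of_nonneg (by linarith), min_eq_right h]; ring

lemma Lp (a b : ℝ) :
    |a ^ 2 - b ^ 2| + (if decide (0 ≤ b) ≠ decide (0 ≤ a) then 2 * min (a ^ 2) (b ^ 2) else 0)
      ≤ |a - b| * (|a| + |b|) := by
  by_cases h : decide (0 ≤ b) = decide (0 ≤ a)
  · simp only [h, ne_eq, not_true_eq_false, if_false, add_zero]
    calc |a ^ 2 - b ^ 2| = |a - b| * |a + b| := by
          rw [← abs_mul]; ring_nf
      _ ≤ |a - b| * (|a| + |b|) := by
          exact mul_le_mul_of_nonneg_left (abs_add_le a b) (abs_nonneg _)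
  · simp only [ne_eq, h, not_false_eq_true, if_true]
    rw [show |a ^ 2 - b ^ 2| + 2 * min (a ^ 2) (b ^ 2) = a ^ 2 + b ^ 2 from absSum _ _]
    have h' : ¬((0 ≤ b) ↔ (0 ≤ a)) := by
      simpa [decide_eq_decide] using h
    rcases le_or_gt 0 a with ha | ha <;> rcases le_or_gt 0 b with hb | hb
    · exact absurd (iff_of_true hb ha) h'
    · rw [abs_of_nonneg ha, abs_of_neg hb, abs_of_nonneg (by linarith : (0:ℝ) ≤ a - b)]
      nlinarith
    · rw [abs_of_neg ha, abs_of_nonneg hb, abs_of_nonpos (by linarith : a - b ≤ 0)]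
      nlinarith
    · exact absurd (iff_of_false (not_le.2 hb) (not_le.2 ha)) h'

lemma Lm (a b : ℝ) :
    |a ^ 2 - b ^ 2| + (if decide (0 ≤ b) = decide (0 ≤ a) then 2 * min (a ^ 2) (b ^ 2) else 0)
      ≤ |a + b| * (|a| + |b|) := by
  by_cases h : decide (0 ≤ b) = decide (0 ≤ a)
  · simp only [h, if_true]
    rw [show |a ^ 2 - b ^ 2| + 2 * min (a ^ 2) (b ^ 2) = a ^ 2 + b ^ 2 from absSum _ _]
    have h' : (0 ≤ b) ↔ (0 ≤ a) := by
      simpa [decide_eq_decide] using h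
    rcases le_or_gt 0 a with ha | ha
    · have hb := h'.2 ha
      rw [abs_of_nonneg (by linarith : (0:ℝ) ≤ a + b), abs_of_nonneg ha, abs_of_nonneg hb]
      nlinarith
    · have hb := lt_of_not_ge (fun c => absurd (h'.1 c) (not_le.2 ha))
      rw [abs_of_nonpos (by linarith : a + b ≤ 0), abs_of_neg ha, abs_of_neg hb]
      nlinarith
  · simp only [h, if_false, add_zero]
    calc |a ^ 2 - b ^ 2| = |a + b| * |a - b| := by rw [← abs_mul]; ring_nf
      _ ≤ |a + b| * (|a| + |b|) := mul_le_mul_of_nonneg_left (abs_sub a b) (abs_nonneg _)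

open Finset in
lemma layer {U : Type} [Fintype U] [DecidableEq U] (ν : U → ℝ)
    (q r : U → U → ℝ) (θ : ℝ)
    (hbase : ∀ S : Finset U, S.Nonempty →
      θ * ∑ u ∈ S, ν u ≤ ∑ u ∈ S, ν u * ((∑ v ∈ Sᶜ, q u v) + ∑ v ∈ S, r u v))
    (g : U → ℝ) (hg : ∀ u, 0 ≤ g u) :
    θ * ∑ u, ν u * g u ≤
      ∑ u, ∑ v, ν u * (q u v * (g u - min (g u) (g v)) + r u v * min (g u) (g v)) := by
  suffices H : ∀ n : ℕ, ∀ g : U → ℝ, (∀ u, 0 ≤ g u) →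
      (Finset.univ.filter fun u => 0 < g u).card ≤ n →
      θ * ∑ u, ν u * g u ≤
        ∑ u, ∑ v, ν u * (q u v * (g u - min (g u) (g v)) + r u v * min (g u) (g v)) from
    H _ g hg le_rfl
  intro n
  induction n with
  | zero =>
    intro g hg hcard
    have hz : ∀ u, g u = 0 := by
      intro u
      by_contra hu
      have hmem : u ∈ Finset.univ.filter fun u => 0 < g u := by
        simp [lt_of_le_of_ne (hg u) (Ne.symm hu)]
      rw [Finset.card_eq_zero.1 (Nat.le_zero.1 hcard)] at hmem
      exact absurd hmem (Finset.notMem_empty u)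
    simp [hz]
  | succ n ih =>
    intro g hg hcard
    by_cases hS : (Finset.univ.filter fun u => 0 < g u).Nonempty
    case neg =>
      have hz : ∀ u, g u = 0 := by
        intro u
        by_contra hu
        exact hS ⟨u, by simp [lt_of_le_of_ne (hg u) (Ne.symm hu)]⟩
      simp [hz]
    case pos =>
    set S : Finset U := Finset.univ.filter fun u => 0 < g u with hSdef
    have hSim : (S.image g).Nonempty := hS.image g
    set m : ℝ := (S.image g).min' hSim with hmdef
    obtain ⟨u₀, hu₀S, hu₀⟩ := Finset.mem_image.1 ((S.image g).min'_mem hSim)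
    have hmle : ∀ u ∈ S, m ≤ g u := fun u hu =>
      (S.image g).min'_le _ (Finset.mem_image_of_mem g hu)
    have hm : 0 < m := by
      rw [hmdef, ← hu₀]; exact (Finset.mem_filter.1 hu₀S).2
    have hgS0 : ∀ u, u ∉ S → g u = 0 := by
      intro u hu
      by_contra h
      exact hu (Finset.mem_filter.2 ⟨Finset.mem_univ u,
        lt_of_le_of_ne (hg u) (Ne.symm h)⟩)
    set e : U → ℝ := fun u => if u ∈ S then m else 0 with hedef
    set g' : U → ℝ := fun u => if u ∈ S then g u - m else 0 with hg'def
    have he : ∀ u, 0 ≤ e u := by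
      intro u; simp only [hedef]
      split
      · exact hm.le
      · exact le_rfl
    have hg' : ∀ u, 0 ≤ g' u := by
      intro u; simp only [hg'def]
      split
      · next h => linarith [hmle u h]
      · exact le_rfl
    have hsum : ∀ u, g u = e u + g' u := by
      intro u; simp only [hedef, hg'def]
      by_cases h : u ∈ S
      · simp [h]
      · simp [h, hgS0 u h]
    have hminsum : ∀ u v, min (g u) (g v) = min (e u) (e v) + min (g' u) (g' v) := by
      intro u v
      by_cases hu : u ∈ S <;> by_cases hv : v ∈ S <;>
        simp only [hedef, hg'def, hu, hv, if_true, if_false]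
      · have h1 := min_sub_sub_right (g u) (g v) m
        rw [min_self]
        linarith
      · rw [hgS0 v hv, min_eq_right (hg u), min_eq_right hm.le,
          min_eq_right (by linarith [hmle u hu] : (0:ℝ) ≤ g u - m)]
        ring
      · rw [hgS0 u hu, min_eq_left (hg v), min_eq_left hm.le,
          min_eq_left (by linarith [hmle v hv] : (0:ℝ) ≤ g v - m)]
        ring
      · rw [hgS0 u hu, hgS0 v hv]
        simp
    -- card bound for g'
    have hcard' : (Finset.univ.filter fun u => 0 < g' u).card ≤ n := by
      have hsub : (Finset.univ.filter fun u => 0 < g' u) ⊆ S.erase u₀ := by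
        intro u hu
        have hpos : 0 < g' u := (Finset.mem_filter.1 hu).2
        have huS : u ∈ S := by
          by_contra h
          rw [hg'def] at hpos
          simp only [h, if_false] at hpos
          exact lt_irrefl 0 hpos
        refine Finset.mem_erase.2 ⟨?_, huS⟩
        intro hEq
        rw [hg'def] at hpos
        simp only [hEq, hu₀S, if_true, hu₀] at hpos
        simp at hpos
        exact lt_irrefl m (lt_of_lt_of_eq (hpos u₀ hu₀S) (hu₀.trans hmdef.symm))
      have h1 := Finset.card_le_card hsub
      have h2 := Finset.card_erase_of_mem hu₀S
      have h3 : S.card ≤ n + 1 := hcard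
      omega
    -- split the RHS
    have hterm : ∀ u v, ν u * (q u v * (g u - min (g u) (g v)) + r u v * min (g u) (g v))
        = ν u * (q u v * (e u - min (e u) (e v)) + r u v * min (e u) (e v))
          + ν u * (q u v * (g' u - min (g' u) (g' v)) + r u v * min (g' u) (g' v)) := by
      intro u v
      rw [hminsum u v, hsum u]
      ring
    have hRHS : (∑ u, ∑ v, ν u * (q u v * (g u - min (g u) (g v)) + r u v * min (g u) (g v)))
        = (∑ u, ∑ v, ν u * (q u v * (e u - min (e u) (e v)) + r u v * min (e u) (e v)))
          + ∑ u, ∑ v, ν u * (q u v * (g' u - min (g' u) (g' v)) + r u v * min (g' u) (g' v)) := by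
      rw [← Finset.sum_add_distrib]
      refine Finset.sum_congr rfl fun u _ => ?_
      rw [← Finset.sum_add_distrib]
      exact Finset.sum_congr rfl fun v _ => hterm u v
    -- compute T_e
    have hTe : (∑ u, ∑ v, ν u * (q u v * (e u - min (e u) (e v)) + r u v * min (e u) (e v)))
        = m * ∑ u ∈ S, ν u * ((∑ v ∈ Sᶜ, q u v) + ∑ v ∈ S, r u v) := by
      rw [← Finset.sum_add_sum_compl S]
      have hzero : ∀ u ∈ Sᶜ, (∑ v, ν u * (q u v * (e u - min (e u) (e v)) + r u v * min (e u) (e v))) = 0 := by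
        intro u hu
        have huS : u ∉ S := Finset.mem_compl.1 hu
        refine Finset.sum_eq_zero fun v _ => ?_
        have heu : e u = 0 := by simp only [hedef, huS, if_false]
        rw [heu, min_eq_left (he v)]
        ring
      rw [Finset.sum_eq_zero hzero, add_zero, Finset.mul_sum]
      refine Finset.sum_congr rfl fun u huS => ?_
      have heu : e u = m := by simp only [hedef, huS, if_true]
      rw [← Finset.sum_add_sum_compl S (fun v => ν u * (q u v * (e u - min (e u) (e v)) + r u v * min (e u) (e v)))]
      have h1 : ∀ v ∈ S, ν u * (q u v * (e u - min (e u) (e v)) + r u v * min (e u) (e v))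
          = ν u * r u v * m := by
        intro v hv
        have hev : e v = m := by simp only [hedef, hv, if_true]
        rw [heu, hev, min_self]
        ring
      have h2 : ∀ v ∈ Sᶜ, ν u * (q u v * (e u - min (e u) (e v)) + r u v * min (e u) (e v))
          = ν u * q u v * m := by
        intro v hv
        have hev : e v = 0 := by simp only [hedef, Finset.mem_compl.1 hv, if_false]
        rw [heu, hev, min_eq_right hm.le]
        ring
      rw [Finset.sum_congr rfl h1, Finset.sum_congr rfl h2,
        show (∑ v ∈ S, ν u * r u v * m) = m * (ν u * ∑ v ∈ S, r u v) by
          rw [Finset.mul_sum, Finset.mul_sum]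
          exact Finset.sum_congr rfl fun v _ => by ring,
        show (∑ v ∈ Sᶜ, ν u * q u v * m) = m * (ν u * ∑ v ∈ Sᶜ, q u v) by
          rw [Finset.mul_sum, Finset.mul_sum]
          exact Finset.sum_congr rfl fun v _ => by ring]
      ring
    -- assemble
    have hνe : ∑ u, ν u * e u = m * ∑ u ∈ S, ν u := by
      simp only [hedef, mul_ite, mul_zero]
      rw [Finset.sum_ite_mem, Finset.univ_inter, Finset.mul_sum]
      exact Finset.sum_congr rfl fun u _ => mul_comm _ _
    have hsplitL : ∑ u, ν u * g u = m * (∑ u ∈ S, ν u) + ∑ u, ν u * g' u := by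
      rw [← hνe, ← Finset.sum_add_distrib]
      exact Finset.sum_congr rfl fun u _ => by rw [hsum u]; ring
    rw [hsplitL, hRHS, hTe, mul_add,
      show θ * (m * ∑ u ∈ S, ν u) = m * (θ * ∑ u ∈ S, ν u) by ring]
    exact add_le_add (mul_le_mul_of_nonneg_left (hbase S hS) hm.le) (ih g' hg' hcard')

open Finset in
lemma gap {U : Type} [Fintype U] [DecidableEq U] (ν : U → ℝ) (Kp Km : U → U → ℝ)
    (hν : ∀ u, 0 < ν u)
    (hKp : ∀ u v, 0 ≤ Kp u v) (hKm : ∀ u v, 0 ≤ Km u v)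
    (hrow : ∀ u, ∑ v, (Kp u v + Km u v) = 1)
    (hrevp : ∀ u v, ν u * Kp u v = ν v * Kp v u)
    (hrevm : ∀ u v, ν u * Km u v = ν v * Km v u)
    (θ : ℝ) (hθ0 : 0 ≤ θ)
    (hβ : ∀ S : Finset U, S.Nonempty → ∀ x : U → Bool, θ ≤ betaSigned ν Kp Km S x)
    (f : U → ℝ)
    (hE0 : 0 ≤ innerNu ν f f - innerNu ν f (signedOp Kp Km f)) :
    θ ^ 2 * innerNu ν f f ≤ 2 * (innerNu ν f f - innerNu ν f (signedOp Kp Km f)) := by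
  classical
  set x : U → Bool := fun u => decide (0 ≤ f u) with hxdef
  set q : U → U → ℝ := fun u v => Kp u v + Km u v with hqdef
  set r : U → U → ℝ := fun u v =>
    (if x v ≠ x u then Kp u v else 0) + (if x v = x u then Km u v else 0) with hrdef
  set g : U → ℝ := fun u => f u ^ 2 with hgdef
  set M : ℝ := innerNu ν f f with hMdef
  set E : ℝ := M - innerNu ν f (signedOp Kp Km f) with hEdef
  have hg : ∀ u, 0 ≤ g u := fun u => sq_nonneg _
  have hM0 : 0 ≤ M := by
    rw [hMdef, innerNu]
    refine Finset.sum_nonneg fun u _ => ?_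
    have : ν u * f u * f u = ν u * f u ^ 2 := by ring
    rw [this]
    exact mul_nonneg (hν u).le (sq_nonneg _)
  -- Step 1: base inequality from hβ
  have hbase : ∀ S : Finset U, S.Nonempty →
      θ * ∑ u ∈ S, ν u ≤ ∑ u ∈ S, ν u * ((∑ v ∈ Sᶜ, q u v) + ∑ v ∈ S, r u v) := by
    intro S hS
    have hpos : 0 < ∑ u ∈ S, ν u := Finset.sum_pos (fun u _ => hν u) hS
    have hb := hβ S hS x
    rw [betaSigned] at hb
    calc θ * ∑ u ∈ S, ν u
        ≤ ((∑ u ∈ S, ν u)⁻¹ *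
            ∑ u ∈ S, ν u * ((∑ v ∈ Sᶜ, (Kp u v + Km u v)) +
              ∑ v ∈ S, ((if x v ≠ x u then Kp u v else 0) + (if x v = x u then Km u v else 0))))
            * ∑ u ∈ S, ν u := mul_le_mul_of_nonneg_right hb hpos.le
      _ = ∑ u ∈ S, ν u * ((∑ v ∈ Sᶜ, q u v) + ∑ v ∈ S, r u v) := by
          rw [mul_comm, ← mul_assoc, mul_inv_cancel₀ (ne_of_gt hpos), one_mul]
  -- Step 2: layer-cake
  have hMg : ∑ u, ν u * g u = M := by
    rw [hMdef, innerNu]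
    exact Finset.sum_congr rfl fun u _ => by rw [hgdef]; ring
  have hD1 : θ * M ≤
      ∑ u, ∑ v, ν u * (q u v * (g u - min (g u) (g v)) + r u v * min (g u) (g v)) := by
    rw [← hMg]
    exact layer ν q r θ hbase g hg
  -- Step 3: symmetrize and bound per pair
  set t : U → U → ℝ := fun u v =>
    ν u * (q u v * (g u - min (g u) (g v)) + r u v * min (g u) (g v)) with htdef
  have hswap : (∑ u, ∑ v, t u v) = ∑ u, ∑ v, t v u := Finset.sum_comm
  have hq' : ∀ u v, ν v * q v u = ν u * q u v := by
    intro u v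
    simp only [hqdef]
    rw [mul_add, mul_add, ← hrevp u v, ← hrevm u v]
  have hr' : ∀ u v, ν v * r v u = ν u * r u v := by
    intro u v
    simp only [hrdef]
    by_cases hxy : x v = x u
    · simp only [hxy, ne_eq, not_true_eq_false, if_false, if_true, zero_add]
      exact (hrevm u v).symm
    · have hxy' : ¬ x u = x v := fun h => hxy h.symm
      simp only [hxy, hxy', ne_eq, not_false_eq_true, if_true, if_false, add_zero]
      exact (hrevp u v).symm
  set w : U → U → ℝ := fun u v =>
    ν u * (Kp u v * (|f u - f v| * (|f u| + |f v|)) + Km u v * (|f u + f v| * (|f u| + |f v|)))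
    with hwdef
  have hpair : ∀ u v, t u v + t v u ≤ w u v := by
    intro u v
    have habs : g u + g v - 2 * min (g u) (g v) = |g u - g v| := by
      have := absSum (g u) (g v)
      linarith
    have h1 : t u v + t v u
        = ν u * (q u v * (g u + g v - 2 * min (g u) (g v)) + 2 * r u v * min (g u) (g v)) := by
      simp only [htdef]
      rw [min_comm (g v) (g u)]
      rw [show ν v * (q v u * (g v - min (g u) (g v)) + r v u * min (g u) (g v))
          = (ν v * q v u) * (g v - min (g u) (g v)) + (ν v * r v u) * min (g u) (g v) by ring,
        hq' u v, hr' u v]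
      ring
    rw [h1, habs]
    have h2 : q u v * |g u - g v| + 2 * r u v * min (g u) (g v)
        = Kp u v * (|g u - g v| + (if x v ≠ x u then 2 * min (g u) (g v) else 0))
          + Km u v * (|g u - g v| + (if x v = x u then 2 * min (g u) (g v) else 0)) := by
      simp only [hqdef, hrdef]
      by_cases hxy : x v = x u
      · simp only [hxy, ne_eq, not_true_eq_false, if_false, if_true]
        ring
      · simp only [hxy, ne_eq, not_false_eq_true, if_true, if_false]
        ring
    rw [h2, hwdef]
    have hLp := Lp (f u) (f v)
    have hLm := Lm (f u) (f v)
    have hgabs : |g u - g v| = |f u ^ 2 - f v ^ 2| := by rw [hgdef]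
    have hmin : min (g u) (g v) = min (f u ^ 2) (f v ^ 2) := by rw [hgdef]
    rw [hgabs, hmin, hxdef]
    refine mul_le_mul_of_nonneg_left ?_ (hν u).le
    exact add_le_add (mul_le_mul_of_nonneg_left hLp (hKp u v))
      (mul_le_mul_of_nonneg_left hLm (hKm u v))
  set N2 : ℝ := ∑ u, ∑ v, w u v with hN2def
  have hN2 : 2 * (θ * M) ≤ N2 := by
    have h1 : 2 * (θ * M) ≤ (∑ u, ∑ v, t u v) + ∑ u, ∑ v, t v u := by
      rw [← hswap]; linarith
    have h2 : (∑ u, ∑ v, t u v) + (∑ u, ∑ v, t v u) = ∑ u, ∑ v, (t u v + t v u) := by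
      rw [← Finset.sum_add_distrib]
      exact Finset.sum_congr rfl fun u _ => by rw [← Finset.sum_add_distrib]
    have h3 : (∑ u, ∑ v, (t u v + t v u)) ≤ N2 :=
      Finset.sum_le_sum fun u _ => Finset.sum_le_sum fun v _ => hpair u v
    linarith
  -- Step 4: Cauchy-Schwarz
  set rf : U × U × Bool → ℝ := fun p =>
    ν p.1 * (if p.2.2 then Kp p.1 p.2.1 else Km p.1 p.2.1) *
      ((if p.2.2 then |f p.1 - f p.2.1| else |f p.1 + f p.2.1|) * (|f p.1| + |f p.2.1|))
    with hrfdef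
  set F : U × U × Bool → ℝ := fun p =>
    ν p.1 * (if p.2.2 then Kp p.1 p.2.1 else Km p.1 p.2.1) *
      (if p.2.2 then (f p.1 - f p.2.1) ^ 2 else (f p.1 + f p.2.1) ^ 2) with hFdef
  set G : U × U × Bool → ℝ := fun p =>
    ν p.1 * (if p.2.2 then Kp p.1 p.2.1 else Km p.1 p.2.1) *
      (|f p.1| + |f p.2.1|) ^ 2 with hGdef
  have hνK : ∀ p : U × U × Bool, 0 ≤ ν p.1 * (if p.2.2 then Kp p.1 p.2.1 else Km p.1 p.2.1) := by
    intro p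
    refine mul_nonneg (hν p.1).le ?_
    split
    · exact hKp _ _
    · exact hKm _ _
  have hCS : (∑ p, rf p) ^ 2 ≤ (∑ p, F p) * ∑ p, G p := by
    refine Finset.sum_sq_le_sum_mul_sum_of_sq_eq_mul Finset.univ
      (fun p _ => ?_) (fun p _ => ?_) (fun p _ => ?_)
    · exact mul_nonneg (hνK p) (by split <;> exact sq_nonneg _)
    · exact mul_nonneg (hνK p) (sq_nonneg _)
    · obtain ⟨u, v, b⟩ := p
      cases b
      · simp only [hrfdef, hFdef, hGdef, if_false, Bool.false_eq_true]
        rw [show (f u + f v) ^ 2 = |f u + f v| ^ 2 from (sq_abs _).symm]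
        ring
      · simp only [hrfdef, hFdef, hGdef, if_true]
        rw [show (f u - f v) ^ 2 = |f u - f v| ^ 2 from (sq_abs _).symm]
        ring
  have hsum3 : ∀ h : U × U × Bool → ℝ,
      (∑ p, h p) = ∑ u, ∑ v, (h (u, v, true) + h (u, v, false)) := by
    intro h
    rw [Fintype.sum_prod_type]
    refine Finset.sum_congr rfl fun u _ => ?_
    rw [Fintype.sum_prod_type]
    refine Finset.sum_congr rfl fun v _ => ?_
    exact Fintype.sum_bool _
  have hsumr : (∑ p, rf p) = N2 := by
    rw [hsum3, hN2def]
    refine Finset.sum_congr rfl fun u _ => Finset.sum_congr rfl fun v _ => ?_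
    simp only [hrfdef, hwdef, if_true, if_false, Bool.false_eq_true]
    ring
  -- sum identities
  have hrowq : ∀ u, ∑ v, q u v = 1 := by
    intro u; simp only [hqdef]; exact hrow u
  have hA : (∑ u, ∑ v, ν u * q u v * f u ^ 2) = M := by
    rw [hMdef, innerNu]
    refine Finset.sum_congr rfl fun u _ => ?_
    rw [show (∑ v, ν u * q u v * f u ^ 2) = (ν u * f u ^ 2) * ∑ v, q u v by
      rw [Finset.mul_sum]; exact Finset.sum_congr rfl fun v _ => by ring]
    rw [hrowq u]
    ring
  have hB : (∑ u, ∑ v, ν u * q u v * f v ^ 2) = M := by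
    rw [Finset.sum_comm, hMdef, innerNu]
    refine Finset.sum_congr rfl fun v _ => ?_
    rw [show (∑ u, ν u * q u v * f v ^ 2) = (∑ u, ν v * q v u) * f v ^ 2 by
      rw [Finset.sum_mul]
      exact Finset.sum_congr rfl fun u _ => by rw [show ν u * q u v = ν v * q v u from hq' v u]]
    rw [← Finset.mul_sum, hrowq v]
    ring
  have hC : (∑ u, ∑ v, ν u * f u * ((Kp u v - Km u v) * f v))
      = innerNu ν f (signedOp Kp Km f) := by
    rw [innerNu]
    refine Finset.sum_congr rfl fun u _ => ?_
    rw [signedOp, Finset.mul_sum]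
  have hsumF : (∑ p, F p) = 2 * E := by
    rw [hsum3]
    have : ∀ u v, F (u, v, true) + F (u, v, false)
        = (ν u * q u v * f u ^ 2 + ν u * q u v * f v ^ 2)
          - 2 * (ν u * f u * ((Kp u v - Km u v) * f v)) := by
      intro u v
      simp only [hFdef, hqdef, if_true, if_false, Bool.false_eq_true]
      ring
    rw [Finset.sum_congr rfl fun u _ => Finset.sum_congr rfl fun v _ => this u v]
    have hsplit : (∑ u, ∑ v, ((ν u * q u v * f u ^ 2 + ν u * q u v * f v ^ 2)
          - 2 * (ν u * f u * ((Kp u v - Km u v) * f v))))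
        = ((∑ u, ∑ v, ν u * q u v * f u ^ 2) + ∑ u, ∑ v, ν u * q u v * f v ^ 2)
          - 2 * ∑ u, ∑ v, ν u * f u * ((Kp u v - Km u v) * f v) := by
      rw [Finset.mul_sum, ← Finset.sum_add_distrib, ← Finset.sum_sub_distrib]
      refine Finset.sum_congr rfl fun u _ => ?_
      rw [Finset.mul_sum, ← Finset.sum_add_distrib, ← Finset.sum_sub_distrib]
    rw [hsplit, hA, hB, hC, hEdef]
    ring
  have hsumG : (∑ p, G p) ≤ 4 * M := by
    rw [hsum3]
    have hstep : ∀ u v, G (u, v, true) + G (u, v, false)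
        ≤ (2 * (ν u * q u v * f u ^ 2) + 2 * (ν u * q u v * f v ^ 2)) := by
      intro u v
      have habs2 : (|f u| + |f v|) ^ 2 ≤ 2 * f u ^ 2 + 2 * f v ^ 2 := by
        nlinarith [sq_abs (f u), sq_abs (f v), sq_nonneg (|f u| - |f v|),
          abs_nonneg (f u), abs_nonneg (f v)]
      have h1 : G (u, v, true) + G (u, v, false)
          = ν u * q u v * (|f u| + |f v|) ^ 2 := by
        simp only [hGdef, hqdef, if_true, if_false, Bool.false_eq_true]
        ring
      rw [h1]
      calc ν u * q u v * (|f u| + |f v|) ^ 2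
          ≤ ν u * q u v * (2 * f u ^ 2 + 2 * f v ^ 2) := by
            refine mul_le_mul_of_nonneg_left habs2 ?_
            exact mul_nonneg (hν u).le
              (by simp only [hqdef]; exact add_nonneg (hKp u v) (hKm u v))
        _ = 2 * (ν u * q u v * f u ^ 2) + 2 * (ν u * q u v * f v ^ 2) := by ring
    calc (∑ u, ∑ v, (G (u, v, true) + G (u, v, false)))
        ≤ ∑ u, ∑ v, (2 * (ν u * q u v * f u ^ 2) + 2 * (ν u * q u v * f v ^ 2)) :=
          Finset.sum_le_sum fun u _ => Finset.sum_le_sum fun v _ => hstep u v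
      _ = 4 * M := by
          rw [show (∑ u, ∑ v, (2 * (ν u * q u v * f u ^ 2) + 2 * (ν u * q u v * f v ^ 2)))
              = 2 * (∑ u, ∑ v, ν u * q u v * f u ^ 2) + 2 * (∑ u, ∑ v, ν u * q u v * f v ^ 2) by
            rw [Finset.mul_sum, Finset.mul_sum, ← Finset.sum_add_distrib]
            refine Finset.sum_congr rfl fun u _ => ?_
            rw [Finset.mul_sum, Finset.mul_sum, ← Finset.sum_add_distrib]]
          rw [hA, hB]
          ring
  -- final assembly
  have hE2 : 0 ≤ E := hE0
  have hfinal : N2 ^ 2 ≤ 2 * E * (4 * M) := by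
    calc N2 ^ 2 = (∑ p, rf p) ^ 2 := by rw [hsumr]
      _ ≤ (∑ p, F p) * ∑ p, G p := hCS
      _ = 2 * E * ∑ p, G p := by rw [hsumF]
      _ ≤ 2 * E * (4 * M) := mul_le_mul_of_nonneg_left hsumG (by linarith)
  have hN2nn : 0 ≤ 2 * (θ * M) := by nlinarith
  rcases eq_or_lt_of_le hM0 with hMz | hMpos
  · rw [← hMz]
    linarith
  · nlinarith [sq_nonneg N2, hN2]

/-- Weighted signed dual Cheeger theorem: if the signed reversible kernel `K = (K⁺,K⁻)` has
`β(K) ≥ θ` and the operator `B = K⁺ − K⁻` is self-adjoint on `L²(ν)` with spectrum in `[0,1]`,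
then `⟨f,(I−B)f⟩_ν ≥ c_Ch θ² ‖f‖²` and `‖B^k f‖ ≤ (1 − c_Ch θ²)^k ‖f‖`. -/
theorem stmt10 :
    ∃ cCh > (0 : ℝ),
      ∀ (U : Type) [Fintype U] [DecidableEq U],
      ∀ (ν : U → ℝ) (Kp Km : U → U → ℝ),
        (∀ u, 0 < ν u) → (∑ u, ν u = 1) →
        (∀ u v, 0 ≤ Kp u v) → (∀ u v, 0 ≤ Km u v) →
        (∀ u, ∑ v, (Kp u v + Km u v) = 1) →
        (∀ u v, ν u * Kp u v = ν v * Kp v u) →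
        (∀ u v, ν u * Km u v = ν v * Km v u) →
        (∀ f g : U → ℝ, innerNu ν f (signedOp Kp Km g) = innerNu ν (signedOp Kp Km f) g) →
        (∀ f : U → ℝ, 0 ≤ innerNu ν f (signedOp Kp Km f) ∧
          innerNu ν f (signedOp Kp Km f) ≤ innerNu ν f f) →
        ∀ θ : ℝ, 0 < θ →
          (∀ S : Finset U, S.Nonempty → ∀ x : U → Bool, θ ≤ betaSigned ν Kp Km S x) →
          (∀ f : U → ℝ,
              cCh * θ ^ 2 * innerNu ν f f ≤ innerNu ν f f - innerNu ν f (signedOp Kp Km f)) ∧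
          (∀ (k : ℕ) (f : U → ℝ),
              Real.sqrt (innerNu ν ((signedOp Kp Km)^[k] f) ((signedOp Kp Km)^[k] f)) ≤
                (1 - cCh * θ ^ 2) ^ k * Real.sqrt (innerNu ν f f)) := by
  refine ⟨1/2, by norm_num, ?_⟩
  intro U _ _ ν Kp Km hν hν1 hKp hKm hrow hrevp hrevm hsa hspec θ hθ hβ
  have hinner0 : ∀ h : U → ℝ, 0 ≤ innerNu ν h h := by
    intro h
    rw [innerNu]
    refine Finset.sum_nonneg fun u _ => ?_
    rw [show ν u * h u * h u = ν u * h u ^ 2 by ring]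
    exact mul_nonneg (hν u).le (sq_nonneg _)
  have hgap : ∀ f : U → ℝ,
      1 / 2 * θ ^ 2 * innerNu ν f f ≤ innerNu ν f f - innerNu ν f (signedOp Kp Km f) := by
    intro f
    have hE0 : 0 ≤ innerNu ν f f - innerNu ν f (signedOp Kp Km f) := by
      linarith [(hspec f).2]
    have := gap ν Kp Km hν hKp hKm hrow hrevp hrevm θ hθ.le hβ f hE0
    linarith
  refine ⟨hgap, ?_⟩
  set μ : ℝ := 1 - 1 / 2 * θ ^ 2 with hμdef
  have hone : innerNu ν (fun _ => (1:ℝ)) (fun _ => (1:ℝ)) = 1 := by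
    rw [innerNu]
    simpa using hν1
  have hμ0 : 0 ≤ μ := by
    have h2 := hgap (fun _ => (1:ℝ))
    have h3 := (hspec (fun _ => (1:ℝ))).1
    rw [hone] at h2
    rw [hμdef]
    linarith
  have hsymm : ∀ a b : U → ℝ, innerNu ν a b = innerNu ν b a := by
    intro a b
    rw [innerNu, innerNu]
    exact Finset.sum_congr rfl fun u _ => by ring
  have hexp : ∀ a b : U → ℝ, innerNu ν a (signedOp Kp Km b)
      = ∑ u, ∑ v, ν u * a u * ((Kp u v - Km u v) * b v) := by
    intro a b
    rw [innerNu]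
    exact Finset.sum_congr rfl fun u _ => by rw [signedOp, Finset.mul_sum]
  have hba : ∀ a b : U → ℝ,
      innerNu ν b (signedOp Kp Km a) = innerNu ν a (signedOp Kp Km b) := by
    intro a b
    rw [hsa b a]
    exact hsymm _ _
  have hsplit4 : ∀ (s : ℝ) (A B C D : U → U → ℝ),
      (∑ u, ∑ v, (A u v + s * B u v + s * C u v + s ^ 2 * D u v))
        = (∑ u, ∑ v, A u v) + s * (∑ u, ∑ v, B u v) + s * (∑ u, ∑ v, C u v)
          + s ^ 2 * (∑ u, ∑ v, D u v) := by
    intro s A B C D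
    rw [Finset.mul_sum, Finset.mul_sum, Finset.mul_sum, ← Finset.sum_add_distrib,
      ← Finset.sum_add_distrib, ← Finset.sum_add_distrib]
    refine Finset.sum_congr rfl fun u _ => ?_
    rw [Finset.mul_sum, Finset.mul_sum, Finset.mul_sum, ← Finset.sum_add_distrib,
      ← Finset.sum_add_distrib, ← Finset.sum_add_distrib]
  have hlin : ∀ (a b : U → ℝ) (s : ℝ),
      innerNu ν (fun u => a u + s * b u) (signedOp Kp Km (fun u => a u + s * b u))
        = innerNu ν a (signedOp Kp Km a) + 2 * s * innerNu ν a (signedOp Kp Km b)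
          + s ^ 2 * innerNu ν b (signedOp Kp Km b) := by
    intro a b s
    have e1 : innerNu ν (fun u => a u + s * b u) (signedOp Kp Km (fun u => a u + s * b u))
        = ∑ u, ∑ v, (ν u * a u * ((Kp u v - Km u v) * a v)
            + s * (ν u * a u * ((Kp u v - Km u v) * b v))
            + s * (ν u * b u * ((Kp u v - Km u v) * a v))
            + s ^ 2 * (ν u * b u * ((Kp u v - Km u v) * b v))) := by
      rw [hexp]
      exact Finset.sum_congr rfl fun u _ => Finset.sum_congr rfl fun v _ => by ring
    rw [e1, hsplit4, ← hexp a a, ← hexp a b, ← hexp b a, ← hexp b b, hba a b]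
    ring
  have hcs : ∀ a b : U → ℝ, innerNu ν a (signedOp Kp Km b) ^ 2
      ≤ innerNu ν a (signedOp Kp Km a) * innerNu ν b (signedOp Kp Km b) := by
    intro a b
    have hquad : ∀ sv : ℝ, 0 ≤ innerNu ν b (signedOp Kp Km b) * (sv * sv)
        + (2 * innerNu ν a (signedOp Kp Km b)) * sv + innerNu ν a (signedOp Kp Km a) := by
      intro sv
      have h := (hspec (fun u => a u + sv * b u)).1
      rw [hlin a b sv] at h
      nlinarith [h]
    have hd := discrim_le_zero hquad
    rw [discrim] at hd
    nlinarith [hd]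
  have hstep : ∀ h : U → ℝ,
      innerNu ν (signedOp Kp Km h) (signedOp Kp Km h)
        ≤ μ ^ 2 * innerNu ν h h := by
    intro h
    have h1 : innerNu ν h (signedOp Kp Km (signedOp Kp Km h))
        = innerNu ν (signedOp Kp Km h) (signedOp Kp Km h) := hsa h (signedOp Kp Km h)
    have h2 := hcs h (signedOp Kp Km h)
    rw [h1] at h2
    have hμa : innerNu ν h (signedOp Kp Km h) ≤ μ * innerNu ν h h := by
      have := hgap h
      rw [hμdef]
      linarith
    have hμb : innerNu ν (signedOp Kp Km h) (signedOp Kp Km (signedOp Kp Km h))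
        ≤ μ * innerNu ν (signedOp Kp Km h) (signedOp Kp Km h) := by
      have := hgap (signedOp Kp Km h)
      rw [hμdef]
      linarith
    have hnn1 : 0 ≤ innerNu ν h (signedOp Kp Km h) := (hspec h).1
    have hnn2 : 0 ≤ innerNu ν (signedOp Kp Km h) (signedOp Kp Km (signedOp Kp Km h)) :=
      (hspec (signedOp Kp Km h)).1
    have hP0 : 0 ≤ innerNu ν (signedOp Kp Km h) (signedOp Kp Km h) := hinner0 _
    have hQ0 : 0 ≤ innerNu ν h h := hinner0 h
    rcases eq_or_lt_of_le hP0 with hPz | hPp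
    · rw [← hPz]
      exact mul_nonneg (sq_nonneg μ) hQ0
    · nlinarith [h2, hμa, hμb, hnn1, hnn2, hQ0, mul_nonneg hμ0 hQ0]
  have hsqrtstep : ∀ h : U → ℝ,
      Real.sqrt (innerNu ν (signedOp Kp Km h) (signedOp Kp Km h))
        ≤ μ * Real.sqrt (innerNu ν h h) := by
    intro h
    calc Real.sqrt (innerNu ν (signedOp Kp Km h) (signedOp Kp Km h))
        ≤ Real.sqrt (μ ^ 2 * innerNu ν h h) := Real.sqrt_le_sqrt (hstep h)
      _ = μ * Real.sqrt (innerNu ν h h) := by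
          rw [Real.sqrt_mul (sq_nonneg μ), Real.sqrt_sq hμ0]
  intro k f
  induction k with
  | zero => simp
  | succ n ih =>
    rw [Function.iterate_succ_apply']
    calc Real.sqrt (innerNu ν (signedOp Kp Km ((signedOp Kp Km)^[n] f))
          (signedOp Kp Km ((signedOp Kp Km)^[n] f)))
        ≤ μ * Real.sqrt (innerNu ν ((signedOp Kp Km)^[n] f) ((signedOp Kp Km)^[n] f)) :=
          hsqrtstep _
      _ ≤ μ * (μ ^ n * Real.sqrt (innerNu ν f f)) := mul_le_mul_of_nonneg_left ih hμ0
      _ = μ ^ (n + 1) * Real.sqrt (innerNu ν f f) := by rw [pow_succ]; ring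
end
end

section
/- Let G=(V,E) be a finite multigraph with m>0 and no isolated vertices, and suppose τ(G) ≤ ε. Then for every real L ≥ 1, Σ_{s∈V} π(s)·μ_L(s) ≤ ε·L. Consequently, for every a>0, Σ_{s∈V: μ_L(s) ≥ a} π(s) ≤ εL/a. -/
open scoped Classical

noncomputable section

/-- Degree of a vertex in a finite multigraph given by endpoint maps (with multiplicity). -/
def mdeg {V E : Type} [Fintype E] [DecidableEq V] (fste snde : E → V) (v : V) : ℕ :=
  (Finset.univ.filter (fun e => fste e = v)).card +
    (Finset.univ.filter (fun e => snde e = v)).card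

/-- The parity-lifted lazy walk on `V × {±1}` (sign encoded by `Bool`, `true = +1`):
from `(v,σ)` stay put with probability `1/2`, and for each edge copy with endpoints `v,u`,
move to `(u,¬σ)` with probability `1/(2 deg v)`. -/
def parWalk {V E : Type} [Fintype V] [Fintype E] [DecidableEq V]
    (fste snde : E → V) : Matrix (V × Bool) (V × Bool) ℝ :=
  Matrix.of fun p q =>
    (if q = p then (1 / 2 : ℝ) else 0) +
    (if q.2 = !p.2 then
        ((Finset.univ.filter (fun e =>
            (fste e = p.1 ∧ snde e = q.1) ∨ (snde e = p.1 ∧ fste e = q.1))).card : ℝ) /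
          (2 * (mdeg fste snde p.1 : ℝ))
      else 0)

/-- The geometric (Personalized PageRank) kernel at scale `L`:
`pr_L = (1/(L+1)) Σ_t (L/(L+1))^t M̂^t`. -/
def parPr {V E : Type} [Fintype V] [Fintype E] [DecidableEq V]
    (fste snde : E → V) (L : ℝ) (p q : V × Bool) : ℝ :=
  ∑' t : ℕ, (1 / (L + 1)) * (L / (L + 1)) ^ t * (parWalk fste snde ^ t) p q

/-- Even/odd overlap statistic: `μ_L(s) = Σ_v min{p⁺_{L,s}(v), p⁻_{L,s}(v)}` where
`p^{±}_{L,s}(v) = pr_L((s,+1),(v,±1))`. -/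
def parMu {V E : Type} [Fintype V] [Fintype E] [DecidableEq V]
    (fste snde : E → V) (L : ℝ) (s : V) : ℝ :=
  ∑ v : V, min (parPr fste snde L (s, true) (v, true)) (parPr fste snde L (s, true) (v, false))

/-- `τ(G)`: the minimum, over two-colorings `χ : V → {±1}`, of the fraction of monochromatic
edge copies. -/
def tauBip {V E : Type} [Fintype V] [Fintype E] [DecidableEq V] (fste snde : E → V) : ℝ :=
  ⨅ χ : V → Bool,
    ((Finset.univ.filter (fun e => χ (fste e) = χ (snde e))).card : ℝ) / (Fintype.card E : ℝ)

set_option linter.unusedSectionVars false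

namespace Aux12

variable {V E : Type} [Fintype V] [Fintype E] [DecidableEq V]
/-- number of edge copies between `u` and `v` -/
def pcnt (fste snde : E → V) (u v : V) : ℕ :=
  (Finset.univ.filter fun e =>
    (fste e = u ∧ snde e = v) ∨ (snde e = u ∧ fste e = v)).card

lemma pcnt_symm (fste snde : E → V) (u v : V) : pcnt fste snde u v = pcnt fste snde v u := by
  unfold pcnt
  congr 1
  apply Finset.filter_congr
  intro e _
  constructor <;> tauto

lemma sum_pcnt (fste snde : E → V) (hne : ∀ e, fste e ≠ snde e) (u : V) :
    ∑ v, pcnt fste snde u v = mdeg fste snde u := by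
  unfold pcnt mdeg
  simp only [Finset.card_filter]
  rw [Finset.sum_comm, ← Finset.sum_add_distrib]
  refine Finset.sum_congr rfl fun e _ => ?_
  by_cases h1 : fste e = u <;> by_cases h2 : snde e = u
  · exact absurd (h1.trans h2.symm) (hne e)
  · simp [h1, h2, Finset.sum_ite_eq]
  · simp [h1, h2, Finset.sum_ite_eq]
  · simp [h1, h2]

lemma sum_mdeg (fste snde : E → V) :
    ∑ v, mdeg fste snde v = 2 * Fintype.card E := by
  unfold mdeg
  rw [Finset.sum_add_distrib]
  have h1 : ∀ f : E → V, ∑ v, (Finset.univ.filter (fun e => f e = v)).card = Fintype.card E := by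
    intro f
    simp only [Finset.card_filter]
    rw [Finset.sum_comm]
    simp [Finset.sum_ite_eq]
  rw [h1, h1]; ring

lemma parWalk_apply (fste snde : E → V) (p q : V × Bool) :
    parWalk fste snde p q =
      (if q = p then (1 / 2 : ℝ) else 0) +
      (if q.2 = !p.2 then (pcnt fste snde p.1 q.1 : ℝ) / (2 * (mdeg fste snde p.1 : ℝ)) else 0) :=
  rfl

lemma parWalk_nonneg (fste snde : E → V) (p q : V × Bool) :
    0 ≤ parWalk fste snde p q := by
  rw [parWalk_apply]
  have h1 : (0:ℝ) ≤ (pcnt fste snde p.1 q.1 : ℝ) / (2 * (mdeg fste snde p.1 : ℝ)) := by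
    apply div_nonneg <;> positivity
  split_ifs <;> simp_all <;> linarith

/-- summing the second coordinate: the projected walk kernel -/
lemma parWalk_sum_bool (fste snde : E → V) (w : V) (c : Bool) (u : V) :
    ∑ b, parWalk fste snde (w, c) (u, b) =
      (if u = w then (1/2:ℝ) else 0) +
        (pcnt fste snde w u : ℝ) / (2 * (mdeg fste snde w : ℝ)) := by
  simp only [parWalk_apply, Fintype.sum_bool, Prod.mk.injEq]
  cases c <;> by_cases h : u = w <;> simp [h] <;> ring

lemma parWalk_rowsum (fste snde : E → V) (hne : ∀ e, fste e ≠ snde e)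
    (hdeg : ∀ v, 0 < mdeg fste snde v) (p : V × Bool) :
    ∑ q, parWalk fste snde p q = 1 := by
  obtain ⟨w, c⟩ := p
  rw [Fintype.sum_prod_type]
  have h1 : ∀ u, ∑ b, parWalk fste snde (w, c) (u, b) =
      (if u = w then (1/2:ℝ) else 0) +
        (pcnt fste snde w u : ℝ) / (2 * (mdeg fste snde w : ℝ)) :=
    fun u => parWalk_sum_bool fste snde w c u
  rw [Finset.sum_congr rfl (fun u _ => h1 u), Finset.sum_add_distrib]
  have h2 : ∑ u, (if u = w then (1/2:ℝ) else 0) = 1/2 := by simp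
  have hd : (0:ℝ) < (mdeg fste snde w : ℝ) := by exact_mod_cast hdeg w
  have h3 : ∑ u, (pcnt fste snde w u : ℝ) / (2 * (mdeg fste snde w : ℝ)) = 1/2 := by
    rw [← Finset.sum_div]
    rw [show ∑ u, (pcnt fste snde w u : ℝ) = (mdeg fste snde w : ℝ) by
      exact_mod_cast congrArg (Nat.cast : ℕ → ℝ) (sum_pcnt fste snde hne w)]
    field_simp
  rw [h2, h3]; norm_num

lemma pow_nonneg' (fste snde : E → V) (t : ℕ) (p q : V × Bool) :
    0 ≤ (parWalk fste snde ^ t) p q := by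
  induction t generalizing p q with
  | zero => simp [Matrix.one_apply]; split_ifs <;> norm_num
  | succ t ih =>
    rw [pow_succ, Matrix.mul_apply]
    exact Finset.sum_nonneg fun r _ => mul_nonneg (ih p r) (parWalk_nonneg fste snde r q)

lemma pow_rowsum (fste snde : E → V) (hne : ∀ e, fste e ≠ snde e)
    (hdeg : ∀ v, 0 < mdeg fste snde v) (t : ℕ) (p : V × Bool) :
    ∑ q, (parWalk fste snde ^ t) p q = 1 := by
  induction t generalizing p with
  | zero => simp [Matrix.one_apply]
  | succ t ih =>
    simp only [pow_succ, Matrix.mul_apply]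
    rw [Finset.sum_comm]
    calc ∑ r, ∑ q, (parWalk fste snde ^ t) p r * parWalk fste snde r q
        = ∑ r, (parWalk fste snde ^ t) p r * 1 := by
          refine Finset.sum_congr rfl fun r _ => ?_
          rw [← Finset.mul_sum, parWalk_rowsum fste snde hne hdeg r]
      _ = 1 := by simpa using ih p

lemma pow_le_one (fste snde : E → V) (hne : ∀ e, fste e ≠ snde e)
    (hdeg : ∀ v, 0 < mdeg fste snde v) (t : ℕ) (p q : V × Bool) :
    (parWalk fste snde ^ t) p q ≤ 1 := by
  rw [← pow_rowsum fste snde hne hdeg t p]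
  exact Finset.single_le_sum (fun r _ => pow_nonneg' fste snde t p r) (Finset.mem_univ q)

/-- stationary weight -/
def pw (fste snde : E → V) (v : V) : ℝ :=
  (mdeg fste snde v : ℝ) / (2 * (Fintype.card E : ℝ))

/-- one-step stationarity of the projected kernel -/
lemma Wstat (fste snde : E → V) (hne : ∀ e, fste e ≠ snde e)
    (hdeg : ∀ v, 0 < mdeg fste snde v) (hm : 0 < Fintype.card E) (u : V) :
    ∑ w, pw fste snde w *
      ((if u = w then (1/2:ℝ) else 0) +
        (pcnt fste snde w u : ℝ) / (2 * (mdeg fste snde w : ℝ))) = pw fste snde u := by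
  have hmR : (0:ℝ) < (Fintype.card E : ℝ) := by exact_mod_cast hm
  simp only [mul_add]
  rw [Finset.sum_add_distrib]
  have h1 : ∑ w, pw fste snde w * (if u = w then (1/2:ℝ) else 0)
      = pw fste snde u * (1/2) := by
    rw [Finset.sum_eq_single u]
    · simp
    · intro w _ hw; simp [Ne.symm hw]
    · intro h; exact absurd (Finset.mem_univ u) h
  have h2 : ∀ w, pw fste snde w * ((pcnt fste snde w u : ℝ) / (2 * (mdeg fste snde w : ℝ)))
      = (pcnt fste snde w u : ℝ) / (4 * (Fintype.card E : ℝ)) := by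
    intro w
    have hd : (0:ℝ) < (mdeg fste snde w : ℝ) := by exact_mod_cast hdeg w
    unfold pw
    field_simp
    ring
  rw [Finset.sum_congr rfl fun w _ => h2 w, ← Finset.sum_div]
  have h3 : ∑ w, (pcnt fste snde w u : ℝ) = (mdeg fste snde u : ℝ) := by
    have : ∑ w, pcnt fste snde w u = mdeg fste snde u := by
      rw [Finset.sum_congr rfl fun w _ => pcnt_symm fste snde w u]
      exact sum_pcnt fste snde hne u
    exact_mod_cast congrArg (Nat.cast : ℕ → ℝ) this
  rw [h1, h3]
  unfold pw
  have hd : (0:ℝ) < (mdeg fste snde u : ℝ) := by exact_mod_cast hdeg u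
  field_simp
  ring

/-- π ⊗ δ_true is (marginally) stationary for the lifted walk -/
lemma stat (fste snde : E → V) (hne : ∀ e, fste e ≠ snde e)
    (hdeg : ∀ v, 0 < mdeg fste snde v) (hm : 0 < Fintype.card E) (t : ℕ) (u : V) :
    ∑ s, pw fste snde s * (∑ b, (parWalk fste snde ^ t) (s, true) (u, b))
      = pw fste snde u := by
  induction t generalizing u with
  | zero =>
    simp only [pow_zero, Matrix.one_apply]
    have h : ∀ s : V, (∑ b, if ((s, true) : V × Bool) = (u, b) then (1:ℝ) else 0)
        = if s = u then 1 else 0 := by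
      intro s; by_cases h : s = u <;> simp [h, Prod.ext_iff, Fintype.sum_bool]
    rw [Finset.sum_congr rfl fun s _ => by rw [h s]]
    rw [Finset.sum_eq_single u]
    · simp
    · intro s _ hs; simp [hs]
    · intro h; exact absurd (Finset.mem_univ u) h
  | succ t ih =>
    have key : ∀ s, (∑ b, (parWalk fste snde ^ (t+1)) (s, true) (u, b))
        = ∑ w, (∑ c, (parWalk fste snde ^ t) (s, true) (w, c)) *
            ((if u = w then (1/2:ℝ) else 0) +
              (pcnt fste snde w u : ℝ) / (2 * (mdeg fste snde w : ℝ))) := by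
      intro s
      simp only [pow_succ, Matrix.mul_apply]
      rw [Finset.sum_comm]
      rw [Fintype.sum_prod_type]
      refine Finset.sum_congr rfl fun w _ => ?_
      rw [Finset.sum_mul]
      refine Finset.sum_congr rfl fun c _ => ?_
      rw [← Finset.mul_sum, parWalk_sum_bool]
    calc ∑ s, pw fste snde s * (∑ b, (parWalk fste snde ^ (t+1)) (s, true) (u, b))
        = ∑ s, ∑ w, pw fste snde s * ((∑ c, (parWalk fste snde ^ t) (s, true) (w, c)) *
            ((if u = w then (1/2:ℝ) else 0) +
              (pcnt fste snde w u : ℝ) / (2 * (mdeg fste snde w : ℝ)))) := by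
          refine Finset.sum_congr rfl fun s _ => ?_
          rw [key s, Finset.mul_sum]
      _ = ∑ w, (∑ s, pw fste snde s * (∑ c, (parWalk fste snde ^ t) (s, true) (w, c))) *
            ((if u = w then (1/2:ℝ) else 0) +
              (pcnt fste snde w u : ℝ) / (2 * (mdeg fste snde w : ℝ))) := by
          rw [Finset.sum_comm]
          refine Finset.sum_congr rfl fun w _ => ?_
          rw [Finset.sum_mul]
          exact Finset.sum_congr rfl fun s _ => (mul_assoc _ _ _).symm
      _ = ∑ w, pw fste snde w *
            ((if u = w then (1/2:ℝ) else 0) +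
              (pcnt fste snde w u : ℝ) / (2 * (mdeg fste snde w : ℝ))) := by
          refine Finset.sum_congr rfl fun w _ => ?_
          rw [ih w]
      _ = pw fste snde u := Wstat fste snde hne hdeg hm u

section Chi
variable (fste snde : E → V) (χ : V → Bool)

/-- number of monochromatic edge copies at `u` -/
def mdegMono (u : V) : ℕ :=
  (Finset.univ.filter fun e =>
    (fste e = u ∨ snde e = u) ∧ χ (fste e) = χ (snde e)).card

def monoCnt : ℕ := (Finset.univ.filter fun e => χ (fste e) = χ (snde e)).card

/-- mismatch probability at time t -/
def qfun (t : ℕ) (s : V) : ℝ :=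
  ∑ v, (parWalk fste snde ^ t) (s, true) (v, !(decide (χ v = χ s)))

lemma sum_pcnt_mono (hne : ∀ e, fste e ≠ snde e) (u : V) :
    ∑ v, (if χ v = χ u then pcnt fste snde u v else 0) = mdegMono fste snde χ u := by
  have h : ∀ v, (if χ v = χ u then pcnt fste snde u v else 0)
      = ∑ e, if χ v = χ u ∧ ((fste e = u ∧ snde e = v) ∨ (snde e = u ∧ fste e = v))
          then 1 else 0 := by
    intro v
    by_cases hv : χ v = χ u
    · rw [if_pos hv]
      unfold pcnt
      rw [Finset.card_filter]
      exact Finset.sum_congr rfl fun e _ => (if_congr (and_iff_right hv).symm rfl rfl)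
    · rw [if_neg hv]
      exact (Finset.sum_eq_zero fun e _ => if_neg (fun h => hv h.1)).symm
  rw [Finset.sum_congr rfl fun v _ => h v, Finset.sum_comm]
  unfold mdegMono
  rw [Finset.card_filter]
  refine Finset.sum_congr rfl fun e _ => ?_
  by_cases h1 : fste e = u <;> by_cases h2 : snde e = u
  · exact absurd (h1.trans h2.symm) (hne e)
  · by_cases hm : χ (fste e) = χ (snde e)
    · have hiff : ∀ v, (χ v = χ u ∧ ((fste e = u ∧ snde e = v) ∨ (snde e = u ∧ fste e = v)))
          ↔ v = snde e := by
        intro v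
        constructor
        · rintro ⟨_, ⟨_, h⟩ | ⟨h, _⟩⟩
          · exact h.symm
          · exact absurd h h2
        · rintro rfl
          exact ⟨by rw [← hm, h1], Or.inl ⟨h1, rfl⟩⟩
      rw [Finset.sum_congr rfl fun v _ => if_congr (hiff v) rfl rfl]
      rw [Finset.sum_ite_eq' Finset.univ (snde e) (fun _ => (1:ℕ))]
      rw [if_pos (Finset.mem_univ _), if_pos ⟨Or.inl h1, hm⟩]
    · have hno : ∀ v, ¬(χ v = χ u ∧ ((fste e = u ∧ snde e = v) ∨ (snde e = u ∧ fste e = v))) := by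
        rintro v ⟨hχ, ⟨_, h⟩ | ⟨h, _⟩⟩
        · exact hm (by rw [h1, ← hχ, h])
        · exact h2 h
      rw [Finset.sum_eq_zero fun v _ => if_neg (hno v), if_neg (fun h => hm h.2)]
  · by_cases hm : χ (fste e) = χ (snde e)
    · have hiff : ∀ v, (χ v = χ u ∧ ((fste e = u ∧ snde e = v) ∨ (snde e = u ∧ fste e = v)))
          ↔ v = fste e := by
        intro v
        constructor
        · rintro ⟨_, ⟨h, _⟩ | ⟨_, h⟩⟩
          · exact absurd h h1
          · exact h.symm
        · rintro rfl
          exact ⟨by rw [hm, h2], Or.inr ⟨h2, rfl⟩⟩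
      rw [Finset.sum_congr rfl fun v _ => if_congr (hiff v) rfl rfl]
      rw [Finset.sum_ite_eq' Finset.univ (fste e) (fun _ => (1:ℕ))]
      rw [if_pos (Finset.mem_univ _), if_pos ⟨Or.inr h2, hm⟩]
    · have hno : ∀ v, ¬(χ v = χ u ∧ ((fste e = u ∧ snde e = v) ∨ (snde e = u ∧ fste e = v))) := by
        rintro v ⟨hχ, ⟨h, _⟩ | ⟨_, h⟩⟩
        · exact h1 h
        · exact hm (by rw [h, hχ, h2])
      rw [Finset.sum_eq_zero fun v _ => if_neg (hno v), if_neg (fun h => hm h.2)]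
  · have hno : ∀ v, ¬(χ v = χ u ∧ ((fste e = u ∧ snde e = v) ∨ (snde e = u ∧ fste e = v))) := by
      rintro v ⟨_, ⟨h, _⟩ | ⟨h, _⟩⟩
      · exact h1 h
      · exact h2 h
    rw [Finset.sum_eq_zero fun v _ => if_neg (hno v),
      if_neg (fun h => h.1.elim h1 h2)]

lemma sum_mdegMono (hne : ∀ e, fste e ≠ snde e) :
    ∑ u, mdegMono fste snde χ u = 2 * monoCnt fste snde χ := by
  unfold mdegMono monoCnt
  simp only [Finset.card_filter]
  rw [Finset.sum_comm, Finset.mul_sum]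
  refine Finset.sum_congr rfl fun e _ => ?_
  by_cases hm : χ (fste e) = χ (snde e)
  · have h : ∀ u, ((fste e = u ∨ snde e = u) ∧ χ (fste e) = χ (snde e))
        ↔ (fste e = u ∨ snde e = u) := by
      intro u; simp [hm]
    simp only [h]
    have hsplit : ∀ u : V, (if fste e = u ∨ snde e = u then (1:ℕ) else 0)
        = (if fste e = u then 1 else 0) + (if snde e = u then 1 else 0) := by
      intro u
      by_cases h1 : fste e = u <;> by_cases h2 : snde e = u
      · exact absurd (h1.trans h2.symm) (hne e)
      all_goals simp [h1, h2]
    rw [Finset.sum_congr rfl fun u _ => hsplit u, Finset.sum_add_distrib]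
    rw [Finset.sum_ite_eq Finset.univ (fste e) (fun _ => (1:ℕ)),
      Finset.sum_ite_eq Finset.univ (snde e) (fun _ => (1:ℕ))]
    simp [hm]
  · rw [Finset.sum_eq_zero fun u _ => if_neg (fun h => hm h.2), if_neg hm]
    simp

lemma sBound (hne : ∀ e, fste e ≠ snde e) (hdeg : ∀ v, 0 < mdeg fste snde v)
    (s u : V) (b : Bool) :
    ∑ v, parWalk fste snde (u, b) (v, !(decide (χ v = χ s)))
      ≤ (if b = !(decide (χ u = χ s)) then (1:ℝ) else 0) +
        (mdegMono fste snde χ u : ℝ) / (2 * (mdeg fste snde u : ℝ)) := by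
  have hd : (0:ℝ) < (mdeg fste snde u : ℝ) := by exact_mod_cast hdeg u
  have expand : ∀ v, parWalk fste snde (u, b) (v, !(decide (χ v = χ s)))
      = (if v = u ∧ (!(decide (χ u = χ s))) = b then (1/2:ℝ) else 0) +
        (if decide (χ v = χ s) = b then
          (pcnt fste snde u v : ℝ) / (2 * (mdeg fste snde u : ℝ)) else 0) := by
    intro v
    rw [parWalk_apply]
    congr 1
    · by_cases hv : v = u
      · subst hv; simp [Prod.ext_iff]
      · simp [Prod.ext_iff, hv]
    · congr 1
      simp only [eq_iff_iff]
      constructor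
      · intro h; exact Bool.not_inj (by simpa using h)
      · intro h; rw [h]
  rw [Finset.sum_congr rfl fun v _ => expand v, Finset.sum_add_distrib]
  have hsum_pcnt : ∑ v, (pcnt fste snde u v : ℝ) = (mdeg fste snde u : ℝ) := by
    exact_mod_cast congrArg (Nat.cast : ℕ → ℝ) (sum_pcnt fste snde hne u)
  by_cases hb : b = !(decide (χ u = χ s))
  · have h1 : ∑ v, (if v = u ∧ (!(decide (χ u = χ s))) = b then (1/2:ℝ) else 0) ≤ 1/2 := by
      rw [Finset.sum_eq_single u]
      · split_ifs <;> norm_num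
      · intro v _ hv; simp [hv]
      · intro h; exact absurd (Finset.mem_univ u) h
    have h2 : ∑ v, (if decide (χ v = χ s) = b then
          (pcnt fste snde u v : ℝ) / (2 * (mdeg fste snde u : ℝ)) else 0) ≤ 1/2 := by
      calc _ ≤ ∑ v, (pcnt fste snde u v : ℝ) / (2 * (mdeg fste snde u : ℝ)) := by
            refine Finset.sum_le_sum fun v _ => ?_
            split_ifs
            · exact le_rfl
            · positivity
        _ = 1/2 := by rw [← Finset.sum_div, hsum_pcnt]; field_simp
    have h3 : (0:ℝ) ≤ (mdegMono fste snde χ u : ℝ) / (2 * (mdeg fste snde u : ℝ)) := by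
      positivity
    rw [if_pos hb]
    linarith
  · have hb' : b = decide (χ u = χ s) := by
      cases b <;> cases h : decide (χ u = χ s) <;> simp_all
    have h1 : ∑ v, (if v = u ∧ (!(decide (χ u = χ s))) = b then (1/2:ℝ) else 0) = 0 := by
      refine Finset.sum_eq_zero fun v _ => ?_
      rw [if_neg]
      rintro ⟨_, h⟩
      exact hb h.symm
    have h2 : ∑ v, (if decide (χ v = χ s) = b then
          (pcnt fste snde u v : ℝ) / (2 * (mdeg fste snde u : ℝ)) else 0)
        = (mdegMono fste snde χ u : ℝ) / (2 * (mdeg fste snde u : ℝ)) := by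
      have hc : ∀ v, (decide (χ v = χ s) = b) ↔ (χ v = χ u) := by
        intro v
        rw [hb']
        cases hv : χ v <;> cases hu : χ u <;> cases hs : χ s <;> simp
      have : ∀ v, (if decide (χ v = χ s) = b then
            (pcnt fste snde u v : ℝ) / (2 * (mdeg fste snde u : ℝ)) else 0)
          = (if χ v = χ u then (pcnt fste snde u v : ℝ) else 0) / (2 * (mdeg fste snde u : ℝ)) := by
        intro v
        rw [if_congr (hc v) rfl rfl]
        split_ifs <;> simp
      rw [Finset.sum_congr rfl fun v _ => this v, ← Finset.sum_div]
      congr 1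
      have := sum_pcnt_mono fste snde χ hne u
      exact_mod_cast congrArg (Nat.cast : ℕ → ℝ) this
    rw [if_neg hb, h1, h2]


lemma qfun_nonneg (t : ℕ) (s : V) : 0 ≤ qfun fste snde χ t s :=
  Finset.sum_nonneg fun v _ => pow_nonneg' fste snde t _ _

lemma qfun_zero (s : V) : qfun fste snde χ 0 s = 0 := by
  unfold qfun
  rw [pow_zero]
  refine Finset.sum_eq_zero fun v _ => ?_
  rw [Matrix.one_apply, if_neg]
  intro h
  rw [Prod.mk.injEq] at h
  obtain ⟨rfl, h2⟩ := h
  simp at h2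

lemma qstep (hne : ∀ e, fste e ≠ snde e) (hdeg : ∀ v, 0 < mdeg fste snde v) (t : ℕ) (s : V) :
    qfun fste snde χ (t+1) s ≤ qfun fste snde χ t s +
      ∑ u, (∑ b, (parWalk fste snde ^ t) (s, true) (u, b)) *
        ((mdegMono fste snde χ u : ℝ) / (2 * (mdeg fste snde u : ℝ))) := by
  have key : qfun fste snde χ (t+1) s
      = ∑ u, ∑ b, (parWalk fste snde ^ t) (s, true) (u, b) *
          (∑ v, parWalk fste snde (u, b) (v, !(decide (χ v = χ s)))) := by
    unfold qfun
    simp only [pow_succ, Matrix.mul_apply]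
    rw [Finset.sum_comm, Fintype.sum_prod_type]
    exact Finset.sum_congr rfl fun u _ => Finset.sum_congr rfl fun b _ =>
      (Finset.mul_sum _ _ _).symm
  rw [key]
  calc ∑ u, ∑ b, (parWalk fste snde ^ t) (s, true) (u, b) *
          (∑ v, parWalk fste snde (u, b) (v, !(decide (χ v = χ s))))
      ≤ ∑ u, ∑ b, (parWalk fste snde ^ t) (s, true) (u, b) *
          ((if b = !(decide (χ u = χ s)) then (1:ℝ) else 0) +
            (mdegMono fste snde χ u : ℝ) / (2 * (mdeg fste snde u : ℝ))) := by
        refine Finset.sum_le_sum fun u _ => Finset.sum_le_sum fun b _ => ?_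
        exact mul_le_mul_of_nonneg_left (sBound fste snde χ hne hdeg s u b)
          (pow_nonneg' fste snde t _ _)
    _ = (∑ u, (parWalk fste snde ^ t) (s, true) (u, !(decide (χ u = χ s)))) +
        ∑ u, (∑ b, (parWalk fste snde ^ t) (s, true) (u, b)) *
          ((mdegMono fste snde χ u : ℝ) / (2 * (mdeg fste snde u : ℝ))) := by
        have inner : ∀ u, ∑ b, (parWalk fste snde ^ t) (s, true) (u, b) *
            ((if b = !(decide (χ u = χ s)) then (1:ℝ) else 0) +
              (mdegMono fste snde χ u : ℝ) / (2 * (mdeg fste snde u : ℝ)))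
            = (parWalk fste snde ^ t) (s, true) (u, !(decide (χ u = χ s))) +
              (∑ b, (parWalk fste snde ^ t) (s, true) (u, b)) *
                ((mdegMono fste snde χ u : ℝ) / (2 * (mdeg fste snde u : ℝ))) := by
          intro u
          rw [Fintype.sum_bool, Fintype.sum_bool]
          by_cases hd : χ u = χ s <;> simp [hd] <;> ring
        rw [Finset.sum_congr rfl fun u _ => inner u, Finset.sum_add_distrib]
    _ = qfun fste snde χ t s +
        ∑ u, (∑ b, (parWalk fste snde ^ t) (s, true) (u, b)) *
          ((mdegMono fste snde χ u : ℝ) / (2 * (mdeg fste snde u : ℝ))) := rfl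

lemma Qbound (hne : ∀ e, fste e ≠ snde e) (hdeg : ∀ v, 0 < mdeg fste snde v)
    (hm : 0 < Fintype.card E) (t : ℕ) :
    ∑ s, pw fste snde s * qfun fste snde χ t s
      ≤ t * ((monoCnt fste snde χ : ℝ) / (2 * (Fintype.card E : ℝ))) := by
  induction t with
  | zero => simp [qfun_zero]
  | succ t ih =>
    have hpw : ∀ s, 0 ≤ pw fste snde s := by
      intro s; unfold pw; positivity
    have step : ∑ s, pw fste snde s * qfun fste snde χ (t+1) s
        ≤ ∑ s, pw fste snde s * qfun fste snde χ t s +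
          ∑ s, pw fste snde s * (∑ u, (∑ b, (parWalk fste snde ^ t) (s, true) (u, b)) *
            ((mdegMono fste snde χ u : ℝ) / (2 * (mdeg fste snde u : ℝ)))) := by
      rw [← Finset.sum_add_distrib]
      refine Finset.sum_le_sum fun s _ => ?_
      rw [← mul_add]
      exact mul_le_mul_of_nonneg_left (qstep fste snde χ hne hdeg t s) (hpw s)
    have swap : ∑ s, pw fste snde s * (∑ u, (∑ b, (parWalk fste snde ^ t) (s, true) (u, b)) *
            ((mdegMono fste snde χ u : ℝ) / (2 * (mdeg fste snde u : ℝ))))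
        = ∑ u, pw fste snde u *
            ((mdegMono fste snde χ u : ℝ) / (2 * (mdeg fste snde u : ℝ))) := by
      calc ∑ s, pw fste snde s * (∑ u, (∑ b, (parWalk fste snde ^ t) (s, true) (u, b)) *
              ((mdegMono fste snde χ u : ℝ) / (2 * (mdeg fste snde u : ℝ))))
          = ∑ s, ∑ u, pw fste snde s * ((∑ b, (parWalk fste snde ^ t) (s, true) (u, b)) *
              ((mdegMono fste snde χ u : ℝ) / (2 * (mdeg fste snde u : ℝ)))) :=
            Finset.sum_congr rfl fun s _ => Finset.mul_sum _ _ _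
        _ = ∑ u, ∑ s, pw fste snde s * ((∑ b, (parWalk fste snde ^ t) (s, true) (u, b)) *
              ((mdegMono fste snde χ u : ℝ) / (2 * (mdeg fste snde u : ℝ)))) :=
            Finset.sum_comm
        _ = ∑ u, (∑ s, pw fste snde s * (∑ b, (parWalk fste snde ^ t) (s, true) (u, b))) *
              ((mdegMono fste snde χ u : ℝ) / (2 * (mdeg fste snde u : ℝ))) := by
            refine Finset.sum_congr rfl fun u _ => ?_
            rw [Finset.sum_mul]
            exact Finset.sum_congr rfl fun s _ => (mul_assoc _ _ _).symm
        _ = ∑ u, pw fste snde u *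
              ((mdegMono fste snde χ u : ℝ) / (2 * (mdeg fste snde u : ℝ))) := by
            refine Finset.sum_congr rfl fun u _ => ?_
            rw [stat fste snde hne hdeg hm t u]
    have avg : ∑ u, pw fste snde u *
          ((mdegMono fste snde χ u : ℝ) / (2 * (mdeg fste snde u : ℝ)))
        = (monoCnt fste snde χ : ℝ) / (2 * (Fintype.card E : ℝ)) := by
      have h1 : ∀ u, pw fste snde u *
            ((mdegMono fste snde χ u : ℝ) / (2 * (mdeg fste snde u : ℝ)))
          = (mdegMono fste snde χ u : ℝ) / (4 * (Fintype.card E : ℝ)) := by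
        intro u
        have hd : (0:ℝ) < (mdeg fste snde u : ℝ) := by exact_mod_cast hdeg u
        have hmR : (0:ℝ) < (Fintype.card E : ℝ) := by exact_mod_cast hm
        unfold pw
        field_simp
        ring
      rw [Finset.sum_congr rfl fun u _ => h1 u, ← Finset.sum_div]
      have h2 : ∑ u, (mdegMono fste snde χ u : ℝ) = 2 * (monoCnt fste snde χ : ℝ) := by
        exact_mod_cast congrArg (Nat.cast : ℕ → ℝ) (sum_mdegMono fste snde χ hne)
      rw [h2]
      have hmR : (0:ℝ) < (Fintype.card E : ℝ) := by exact_mod_cast hm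
      field_simp
      ring
    have hfin : ∑ s, pw fste snde s * qfun fste snde χ (t+1) s
        ≤ (t : ℝ) * ((monoCnt fste snde χ : ℝ) / (2 * (Fintype.card E : ℝ))) +
          (monoCnt fste snde χ : ℝ) / (2 * (Fintype.card E : ℝ)) := by
      rw [swap] at step
      rw [avg] at step
      linarith
    rw [Nat.cast_add, Nat.cast_one, add_mul, one_mul]
    exact hfin

end Chi

end Aux12

open Aux12

/-- Weighted completeness for parity overlap: if `τ(G) ≤ ε` then
`E_{s∼π} μ_L(s) ≤ ε L`, and hence `Pr_{s∼π}[μ_L(s) ≥ a] ≤ ε L / a`. -/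
theorem stmt12 (V E : Type) [Fintype V] [Fintype E] [DecidableEq V]
    (fste snde : E → V) (hne : ∀ e, fste e ≠ snde e)
    (hdeg : ∀ v, 0 < mdeg fste snde v)
    (hm : 0 < Fintype.card E)
    (ε : ℝ) (hτ : tauBip fste snde ≤ ε) :
    ∀ L : ℝ, 1 ≤ L →
      (∑ s : V, ((mdeg fste snde s : ℝ) / (2 * (Fintype.card E : ℝ))) * parMu fste snde L s)
          ≤ ε * L ∧
      ∀ a : ℝ, 0 < a →
        (∑ s ∈ Finset.univ.filter (fun s : V => a ≤ parMu fste snde L s),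
            ((mdeg fste snde s : ℝ) / (2 * (Fintype.card E : ℝ))))
          ≤ ε * L / a := by
  intro L hL
  -- basic positivity facts
  have hL0 : (0:ℝ) < L + 1 := by linarith
  have hLpos : (0:ℝ) < L := by linarith
  have hlam0 : (0:ℝ) ≤ L / (L + 1) := by positivity
  have hlam1 : L / (L + 1) < 1 := (div_lt_one hL0).2 (by linarith)
  have hznn : (0:ℝ) ≤ 1 / (L + 1) := by positivity
  have hmR : (0:ℝ) < (Fintype.card E : ℝ) := by exact_mod_cast hm
  have hpw : ∀ s : V, 0 ≤ pw fste snde s := fun s => by unfold pw; positivity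
  have hnorm : ‖L / (L + 1)‖ < 1 := by rwa [Real.norm_eq_abs, abs_of_nonneg hlam0]
  have S1 : Summable (fun t : ℕ => (L / (L + 1)) ^ t) :=
    summable_geometric_of_lt_one hlam0 hlam1
  -- choose an optimal coloring
  obtain ⟨χ0, hχ0⟩ := Finite.exists_min (fun χ : V → Bool =>
    ((Finset.univ.filter (fun e => χ (fste e) = χ (snde e))).card : ℝ) / (Fintype.card E : ℝ))
  have hmono : ((monoCnt fste snde χ0 : ℝ) / (Fintype.card E : ℝ)) ≤ ε := by
    refine le_trans ?_ hτ
    exact le_ciInf hχ0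
  have hmono0 : (0:ℝ) ≤ (monoCnt fste snde χ0 : ℝ) / (Fintype.card E : ℝ) := by positivity
  have hε0 : (0:ℝ) ≤ ε := le_trans hmono0 hmono
  set c : ℝ := (monoCnt fste snde χ0 : ℝ) / (2 * (Fintype.card E : ℝ)) with hc
  have hc0 : 0 ≤ c := by positivity
  have hcε : c ≤ ε := by
    rw [hc]
    calc (monoCnt fste snde χ0 : ℝ) / (2 * (Fintype.card E : ℝ))
        = ((monoCnt fste snde χ0 : ℝ) / (Fintype.card E : ℝ)) / 2 := by ring
      _ ≤ ε / 2 := by linarith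
      _ ≤ ε := by linarith
  -- summability of the entrywise geometric series
  have hSentry : ∀ p q : V × Bool,
      Summable (fun t : ℕ => (1 / (L + 1)) * (L / (L + 1)) ^ t * (parWalk fste snde ^ t) p q) := by
    intro p q
    refine Summable.of_nonneg_of_le (fun t => ?_) (fun t => ?_) (S1.mul_left (1 / (L + 1)))
    · exact mul_nonneg (mul_nonneg hznn (pow_nonneg hlam0 t)) (pow_nonneg' fste snde t p q)
    · exact mul_le_of_le_one_right (mul_nonneg hznn (pow_nonneg hlam0 t))
        (pow_le_one fste snde hne hdeg t p q)
  have hPrnn : ∀ p q : V × Bool, 0 ≤ parPr fste snde L p q := by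
    intro p q
    exact tsum_nonneg fun t => mul_nonneg (mul_nonneg hznn (pow_nonneg hlam0 t))
      (pow_nonneg' fste snde t p q)
  have hq_le : ∀ t s, qfun fste snde χ0 t s ≤ (Fintype.card V : ℝ) := by
    intro t s
    calc qfun fste snde χ0 t s ≤ ∑ _v : V, (1:ℝ) :=
          Finset.sum_le_sum fun v _ => pow_le_one fste snde hne hdeg t _ _
      _ = (Fintype.card V : ℝ) := by simp
  have hSq : ∀ s : V, Summable (fun t : ℕ =>
      ((1 / (L + 1)) * (L / (L + 1)) ^ t) * qfun fste snde χ0 t s) := by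
    intro s
    refine Summable.of_nonneg_of_le (fun t => ?_) (fun t => ?_)
      ((S1.mul_left (1 / (L + 1))).mul_right (Fintype.card V : ℝ))
    · exact mul_nonneg (mul_nonneg hznn (pow_nonneg hlam0 t)) (qfun_nonneg fste snde χ0 t s)
    · exact mul_le_mul_of_nonneg_left (hq_le t s) (mul_nonneg hznn (pow_nonneg hlam0 t))
  -- bound μ by the mismatch series
  have hmu_le : ∀ s : V, parMu fste snde L s
      ≤ ∑' t : ℕ, ((1 / (L + 1)) * (L / (L + 1)) ^ t) * qfun fste snde χ0 t s := by
    intro s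
    have h1 : parMu fste snde L s
        ≤ ∑ v : V, parPr fste snde L (s, true) (v, !(decide (χ0 v = χ0 s))) := by
      refine Finset.sum_le_sum fun v _ => ?_
      by_cases hbv : χ0 v = χ0 s
      · rw [decide_eq_true hbv, Bool.not_true]
        exact min_le_right _ _
      · rw [decide_eq_false hbv, Bool.not_false]
        exact min_le_left _ _
    refine le_trans h1 ?_
    rw [show (∑ v : V, parPr fste snde L (s, true) (v, !(decide (χ0 v = χ0 s))))
        = ∑' t : ℕ, ∑ v : V, (1 / (L + 1)) * (L / (L + 1)) ^ t *
            (parWalk fste snde ^ t) (s, true) (v, !(decide (χ0 v = χ0 s))) from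
      (Summable.tsum_finsetSum fun v _ => hSentry (s, true) (v, !(decide (χ0 v = χ0 s)))).symm]
    refine le_of_eq (tsum_congr fun t => ?_)
    unfold qfun
    rw [Finset.mul_sum]
  -- the expectation bound
  have main1 : ∑ s : V, pw fste snde s * parMu fste snde L s
      ≤ ∑' t : ℕ, ((1 / (L + 1)) * (L / (L + 1)) ^ t) *
          (∑ s : V, pw fste snde s * qfun fste snde χ0 t s) := by
    calc ∑ s : V, pw fste snde s * parMu fste snde L s
        ≤ ∑ s : V, pw fste snde s *
            (∑' t : ℕ, ((1 / (L + 1)) * (L / (L + 1)) ^ t) * qfun fste snde χ0 t s) :=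
          Finset.sum_le_sum fun s _ => mul_le_mul_of_nonneg_left (hmu_le s) (hpw s)
      _ = ∑ s : V, ∑' t : ℕ, pw fste snde s *
            (((1 / (L + 1)) * (L / (L + 1)) ^ t) * qfun fste snde χ0 t s) :=
          Finset.sum_congr rfl fun s _ => (tsum_mul_left).symm
      _ = ∑' t : ℕ, ∑ s : V, pw fste snde s *
            (((1 / (L + 1)) * (L / (L + 1)) ^ t) * qfun fste snde χ0 t s) :=
          (Summable.tsum_finsetSum fun s _ => (hSq s).mul_left (pw fste snde s)).symm
      _ = ∑' t : ℕ, ((1 / (L + 1)) * (L / (L + 1)) ^ t) *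
            (∑ s : V, pw fste snde s * qfun fste snde χ0 t s) := by
          refine tsum_congr fun t => ?_
          rw [Finset.mul_sum]
          exact Finset.sum_congr rfl fun s _ => by ring
  have hSmaj : Summable (fun t : ℕ =>
      ((1 / (L + 1)) * (L / (L + 1)) ^ t) * ((t : ℝ) * c)) := by
    refine Summable.congr
      (((hasSum_coe_mul_geometric_of_norm_lt_one hnorm).summable).mul_left (c / (L + 1))) ?_
    intro t
    ring
  have hQnn : ∀ t : ℕ, 0 ≤ ∑ s : V, pw fste snde s * qfun fste snde χ0 t s :=
    fun t => Finset.sum_nonneg fun s _ =>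
      mul_nonneg (hpw s) (qfun_nonneg fste snde χ0 t s)
  have main2 : ∑' t : ℕ, ((1 / (L + 1)) * (L / (L + 1)) ^ t) *
        (∑ s : V, pw fste snde s * qfun fste snde χ0 t s)
      ≤ ∑' t : ℕ, ((1 / (L + 1)) * (L / (L + 1)) ^ t) * ((t : ℝ) * c) := by
    have hle : ∀ t : ℕ, ((1 / (L + 1)) * (L / (L + 1)) ^ t) *
          (∑ s : V, pw fste snde s * qfun fste snde χ0 t s)
        ≤ ((1 / (L + 1)) * (L / (L + 1)) ^ t) * ((t : ℝ) * c) := by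
      intro t
      exact mul_le_mul_of_nonneg_left (Qbound fste snde χ0 hne hdeg hm t)
        (mul_nonneg hznn (pow_nonneg hlam0 t))
    refine Summable.tsum_le_tsum hle ?_ hSmaj
    exact Summable.of_nonneg_of_le
      (fun t => mul_nonneg (mul_nonneg hznn (pow_nonneg hlam0 t)) (hQnn t)) hle hSmaj
  have main3 : ∑' t : ℕ, ((1 / (L + 1)) * (L / (L + 1)) ^ t) * ((t : ℝ) * c) = c * L := by
    have h1 : ∀ t : ℕ, ((1 / (L + 1)) * (L / (L + 1)) ^ t) * ((t : ℝ) * c)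
        = (c / (L + 1)) * ((t : ℝ) * (L / (L + 1)) ^ t) := fun t => by ring
    rw [tsum_congr h1, tsum_mul_left, tsum_coe_mul_geometric_of_norm_lt_one hnorm]
    have h2 : 1 - L / (L + 1) = 1 / (L + 1) := by field_simp; ring
    rw [h2]
    field_simp
  have mainf : ∑ s : V, pw fste snde s * parMu fste snde L s ≤ ε * L := by
    refine le_trans main1 (le_trans main2 ?_)
    rw [main3]
    exact mul_le_mul_of_nonneg_right hcε (le_of_lt hLpos)
  have hμnn : ∀ s : V, 0 ≤ parMu fste snde L s := by
    intro s
    exact Finset.sum_nonneg fun v _ => le_min (hPrnn _ _) (hPrnn _ _)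
  constructor
  · exact mainf
  · intro a ha
    rw [le_div_iff₀ ha]
    calc (∑ s ∈ Finset.univ.filter (fun s : V => a ≤ parMu fste snde L s),
            ((mdeg fste snde s : ℝ) / (2 * (Fintype.card E : ℝ)))) * a
        = ∑ s ∈ Finset.univ.filter (fun s : V => a ≤ parMu fste snde L s),
            pw fste snde s * a := by rw [Finset.sum_mul]; rfl
      _ ≤ ∑ s ∈ Finset.univ.filter (fun s : V => a ≤ parMu fste snde L s),
            pw fste snde s * parMu fste snde L s := by
          refine Finset.sum_le_sum fun s hs => ?_
          exact mul_le_mul_of_nonneg_left (Finset.mem_filter.1 hs).2 (hpw s)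
      _ ≤ ∑ s : V, pw fste snde s * parMu fste snde L s :=
          Finset.sum_le_sum_of_subset_of_nonneg (Finset.filter_subset _ _)
            (fun s _ _ => mul_nonneg (hpw s) (hμnn s))
      _ ≤ ε * L := mainf
end
end

section
/- Let L,L' be reals with 1 ≤ L ≤ L', and for a real L≥1 let Geom_L denote the probability distribution on ℕ with Geom_L({t}) = (1/(L+1))·(L/(L+1))^t for t=0,1,2,…. Then there exists a probability distribution ν on ℕ such that Geom_{L'} is the convolution of Geom_L with ν; that is, Geom_{L'}({t}) = Σ_{h=0}^{t} Geom_L({h})·ν({t−h}) for every t∈ℕ. -/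
/-- The geometric distribution on `ℕ` with mean `L`: `Geom_L({t}) = (1/(L+1))·(L/(L+1))^t`. -/
noncomputable def geomPMF (L : ℝ) (t : ℕ) : ℝ := (1 / (L + 1)) * (L / (L + 1)) ^ t

/-- For `1 ≤ L ≤ L'`, the geometric distribution with mean `L'` is the convolution of the
geometric distribution with mean `L` with some probability distribution `ν` on `ℕ`. -/
theorem stmt15 (L L' : ℝ) (hL : 1 ≤ L) (hLL' : L ≤ L') :
    ∃ ν : ℕ → ℝ, (∀ t, 0 ≤ ν t) ∧ (∑' t : ℕ, ν t) = 1 ∧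
      ∀ t : ℕ, geomPMF L' t = ∑ h ∈ Finset.range (t + 1), geomPMF L h * ν (t - h) := by
  set a : ℝ := L / (L + 1) with ha_def
  set b : ℝ := L' / (L' + 1) with hb_def
  have hL0 : (0:ℝ) < L + 1 := by linarith
  have hL'0 : (0:ℝ) < L' + 1 := by linarith
  have ha0 : 0 < a := div_pos (by linarith) hL0
  have hb0 : 0 < b := div_pos (by linarith) hL'0
  have ha1 : a < 1 := by rw [ha_def, div_lt_one hL0]; linarith
  have hb1 : b < 1 := by rw [hb_def, div_lt_one hL'0]; linarith
  have hab : a ≤ b := by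
    rw [ha_def, hb_def, div_le_div_iff₀ hL0 hL'0]; nlinarith
  have h1a : (0:ℝ) < 1 - a := by linarith
  have h1b : (0:ℝ) < 1 - b := by linarith
  set c : ℝ := (1 - b) / (1 - a) with hc_def
  have hc0 : 0 ≤ c := le_of_lt (div_pos h1b h1a)
  have hab1 : a / b ≤ 1 := (div_le_one hb0).2 hab
  have hgL : ∀ t, geomPMF L t = (1 - a) * a ^ t := by
    intro t
    unfold geomPMF
    rw [ha_def]
    congr 1
    field_simp
    ring
  have hgL' : ∀ t, geomPMF L' t = (1 - b) * b ^ t := by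
    intro t
    unfold geomPMF
    rw [hb_def]
    congr 1
    field_simp
    ring
  refine ⟨fun t => c * ((if t = 0 then a / b else 0) + (1 - a / b) * b ^ t), ?_, ?_, ?_⟩
  · intro t
    have h1 : (0:ℝ) ≤ (if t = 0 then a / b else 0) := by
      split <;> positivity
    have h2 : (0:ℝ) ≤ (1 - a / b) * b ^ t := by
      have : 0 ≤ 1 - a / b := by linarith
      positivity
    positivity
  · have hs1 : Summable (fun t : ℕ => (if t = 0 then a / b else 0)) := by
      apply summable_of_ne_finset_zero (s := {0})
      intro t ht
      simp at ht
      simp [ht]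
    have hs2 : Summable (fun t : ℕ => (1 - a / b) * b ^ t) :=
      (summable_geometric_of_lt_one hb0.le hb1).mul_left _
    rw [tsum_mul_left, Summable.tsum_add hs1 hs2, tsum_ite_eq, tsum_mul_left,
      tsum_geometric_of_lt_one hb0.le hb1]
    rw [hc_def]
    field_simp
    ring
  · intro t
    rw [hgL']
    have key : ∀ h ∈ Finset.range (t + 1),
        geomPMF L h * (c * ((if t - h = 0 then a / b else 0) + (1 - a / b) * b ^ (t - h)))
        = (if h = t then (1 - a) * c * (a ^ t * (a / b)) else 0)
          + (1 - a) * c * (1 - a / b) * (a ^ h * b ^ (t - h)) := by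
      intro h hh
      rw [Finset.mem_range] at hh
      rw [hgL]
      rcases eq_or_ne h t with rfl | hne
      · simp [Nat.sub_self]
        ring
      · have : t - h ≠ 0 := Nat.sub_ne_zero_of_lt (lt_of_le_of_ne (Nat.lt_succ_iff.1 hh) hne)
        simp [this, hne]
        ring
    rw [Finset.sum_congr rfl key, Finset.sum_add_distrib, Finset.sum_ite_eq'
      (Finset.range (t+1)) t, if_pos (Finset.self_mem_range_succ t), ← Finset.mul_sum]
    have hS := geom_sum₂_mul a b (t + 1)
    set S : ℝ := ∑ h ∈ Finset.range (t + 1), a ^ h * b ^ (t - h) with hS_def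
    have hS' : ∑ h ∈ Finset.range (t + 1), a ^ h * b ^ (t + 1 - 1 - h) = S := by
      apply Finset.sum_congr rfl
      intro h hh; simp
    rw [hS'] at hS
    rw [hc_def]
    have hbne : b ≠ 0 := ne_of_gt hb0
    have h1ane : (1:ℝ) - a ≠ 0 := ne_of_gt h1a
    clear_value a b S
    field_simp
    linear_combination hS
end

section
/- Let U be a finite set, ν a probability measure on U, and g:U→[0,∞) a function with Σ_{u∈U} ν(u)·g(u) = 1. For τ>0 let S_τ = {u∈U : g(u) > τ}. Let B,I:(0,∞)→[0,∞) be Lebesgue measurable functions with ∫_0^∞ B(τ)dτ ≤ G₀ and ∫_0^∞ I(τ)dτ ≤ J₀ for reals G₀,J₀ ≥ 0. Then there exists τ>0 with ν(S_τ) > 0 and B(τ) + I(τ) ≤ (G₀+J₀)·ν(S_τ). -/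
open MeasureTheory

/-- Analytic core: if `F` is nonnegative with `∫_{(0,∞)} F = 1`, vanishes on `[M,∞)` with
`M > 0`, `B, I` nonnegative measurable with combined integral `≤ c`, then it cannot be that
`c·F < B + I` on all of `(0,M)`. -/
lemma stmt19_aux (F B I : ℝ → ℝ) (M c : ℝ) (hM : 0 < M) (hc : 0 ≤ c)
    (hBm : Measurable B) (hIm : Measurable I)
    (hB0 : ∀ τ, 0 ≤ B τ) (hI0 : ∀ τ, 0 ≤ I τ)
    (hFnn : ∀ τ, 0 ≤ F τ)
    (hlayer : (∫⁻ τ in Set.Ioi (0 : ℝ), ENNReal.ofReal (F τ)) = 1)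
    (hFzero : ∀ τ, M ≤ τ → F τ = 0)
    (hBIint : (∫⁻ τ in Set.Ioi (0 : ℝ), ENNReal.ofReal (B τ + I τ)) ≤ ENNReal.ofReal c)
    (hcon : ∀ τ ∈ Set.Ioo (0 : ℝ) M, c * F τ < B τ + I τ) : False := by
  have hsetsplit : Set.Ioi (0 : ℝ) = Set.Ioo 0 M ∪ Set.Ici M := by
    ext x
    simp only [Set.mem_Ioi, Set.mem_union, Set.mem_Ioo, Set.mem_Ici]
    constructor
    · intro hx
      rcases lt_or_ge x M with h | h
      · exact Or.inl ⟨hx, h⟩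
      · exact Or.inr h
    · rintro (⟨h1, _⟩ | h); · exact h1
      · linarith
  have hzero : (∫⁻ τ in Set.Ici M, ENNReal.ofReal (F τ)) = 0 := by
    rw [setLIntegral_congr_fun measurableSet_Ici
      ((fun τ hτ => by
        simp [hFzero τ hτ] : ∀ τ ∈ Set.Ici M, ENNReal.ofReal (F τ) = 0))]
    simp
  have hsplit : (∫⁻ τ in Set.Ioo (0:ℝ) M, ENNReal.ofReal (F τ)) = 1 := by
    have hdisj : Disjoint (Set.Ioo (0:ℝ) M) (Set.Ici M) := by
      apply Set.disjoint_left.2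
      rintro x ⟨_, h2⟩ h3
      exact absurd h3 (not_le.2 h2)
    rw [hsetsplit, lintegral_union measurableSet_Ici hdisj, hzero, add_zero] at hlayer
    exact hlayer
  -- integral of c·F over (0,M) is ofReal c
  have hcF : (∫⁻ τ in Set.Ioo (0:ℝ) M, ENNReal.ofReal (c * F τ)) = ENNReal.ofReal c := by
    have : ∀ τ, ENNReal.ofReal (c * F τ) = ENNReal.ofReal c * ENNReal.ofReal (F τ) := by
      intro τ; exact ENNReal.ofReal_mul hc
    simp_rw [this]
    rw [lintegral_const_mul' _ _ ENNReal.ofReal_ne_top, hsplit, mul_one]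
  have hμ : (volume.restrict (Set.Ioo (0:ℝ) M)) ≠ 0 := by
    intro h
    rw [Measure.restrict_eq_zero, Real.volume_Ioo] at h
    simp only [ENNReal.ofReal_eq_zero] at h
    linarith
  have hstrict : (∫⁻ τ in Set.Ioo (0:ℝ) M, ENNReal.ofReal (c * F τ)) <
      ∫⁻ τ in Set.Ioo (0:ℝ) M, ENNReal.ofReal (B τ + I τ) := by
    apply lintegral_strict_mono hμ ((hBm.add hIm).ennreal_ofReal.aemeasurable)
    · rw [hcF]; exact ENNReal.ofReal_ne_top
    · rw [ae_restrict_iff' measurableSet_Ioo]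
      refine Filter.Eventually.of_forall (fun τ hτ => ?_)
      have h1 := hcon τ hτ
      have h2 : 0 ≤ c * F τ := mul_nonneg hc (hFnn τ)
      exact (ENNReal.ofReal_lt_ofReal_iff (lt_of_le_of_lt h2 h1)).2 h1
  have hmono : (∫⁻ τ in Set.Ioo (0:ℝ) M, ENNReal.ofReal (B τ + I τ)) ≤
      ∫⁻ τ in Set.Ioi (0:ℝ), ENNReal.ofReal (B τ + I τ) :=
    lintegral_mono_set (fun x hx => hx.1)
  rw [hcF] at hstrict
  exact lt_irrefl _ (lt_of_lt_of_le hstrict (le_trans hmono hBIint))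

/-- Threshold averaging: if `ν` is a probability measure on a finite set `U`, `g ≥ 0` has
`ν`-average `1`, and `B, I ≥ 0` are measurable with `∫_0^∞ B ≤ G₀`, `∫_0^∞ I ≤ J₀`, then some
superlevel set `S_τ = {u : g(u) > τ}` with `ν(S_τ) > 0` satisfies
`B(τ) + I(τ) ≤ (G₀+J₀)·ν(S_τ)`. -/
theorem stmt19 (U : Type) [Fintype U]
    (ν : U → ℝ) (hν0 : ∀ u, 0 ≤ ν u) (hν1 : ∑ u, ν u = 1)
    (g : U → ℝ) (hg0 : ∀ u, 0 ≤ g u) (hg1 : ∑ u, ν u * g u = 1)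
    (B I : ℝ → ℝ) (hB0 : ∀ τ, 0 ≤ B τ) (hI0 : ∀ τ, 0 ≤ I τ)
    (hBm : Measurable B) (hIm : Measurable I)
    (G₀ J₀ : ℝ) (hG₀ : 0 ≤ G₀) (hJ₀ : 0 ≤ J₀)
    (hBint : (∫⁻ τ in Set.Ioi (0 : ℝ), ENNReal.ofReal (B τ)) ≤ ENNReal.ofReal G₀)
    (hIint : (∫⁻ τ in Set.Ioi (0 : ℝ), ENNReal.ofReal (I τ)) ≤ ENNReal.ofReal J₀) :
    ∃ τ : ℝ, 0 < τ ∧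
      0 < (∑ u ∈ Finset.univ.filter (fun u => τ < g u), ν u) ∧
      B τ + I τ ≤ (G₀ + J₀) * ∑ u ∈ Finset.univ.filter (fun u => τ < g u), ν u := by
  classical
  by_contra hcon
  push_neg at hcon
  set F : ℝ → ℝ := fun τ => ∑ u ∈ Finset.univ.filter (fun u => τ < g u), ν u with hFdef
  have hcon' : ∀ τ, 0 < τ → 0 < F τ → (G₀ + J₀) * F τ < B τ + I τ := fun τ h1 h2 =>
    hcon τ h1 h2
  have hFnn : ∀ τ, 0 ≤ F τ := fun τ => Finset.sum_nonneg (fun u _ => hν0 u)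
  -- some u with ν u > 0 and g u > 0
  have hexists : ∃ u, 0 < ν u ∧ 0 < g u := by
    by_contra h
    push_neg at h
    have hz : ∑ u, ν u * g u = 0 := Finset.sum_eq_zero (fun u _ => by
      rcases (hν0 u).lt_or_eq with h1 | h1
      · have h2 := h u h1
        have h3 := hg0 u
        have : g u = 0 := le_antisymm h2 h3
        rw [this, mul_zero]
      · rw [← h1, zero_mul])
    rw [hz] at hg1; norm_num at hg1
  obtain ⟨u₀, hu₀ν, hu₀g⟩ := hexists
  set s : Finset U := Finset.univ.filter (fun u => 0 < ν u) with hsdef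
  have hs : u₀ ∈ s := by simp [hsdef, hu₀ν]
  have hsne : s.Nonempty := ⟨u₀, hs⟩
  set M : ℝ := s.sup' hsne g with hMdef
  have hM0 : 0 < M := lt_of_lt_of_le hu₀g (Finset.le_sup' g hs)
  obtain ⟨u₁, hu₁s, hu₁⟩ := Finset.exists_mem_eq_sup' hsne g
  have hu₁ν : 0 < ν u₁ := (Finset.mem_filter.1 hu₁s).2
  -- F positive on (0,M)
  have hFpos : ∀ τ ∈ Set.Ioo (0:ℝ) M, 0 < F τ := by
    intro τ hτ
    have hmem : u₁ ∈ Finset.univ.filter (fun u => τ < g u) := by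
      simp only [Finset.mem_filter, Finset.mem_univ, true_and]
      exact lt_of_lt_of_eq hτ.2 (hMdef.trans hu₁)
    calc (0:ℝ) < ν u₁ := hu₁ν
      _ ≤ F τ := Finset.single_le_sum (fun u _ => hν0 u) hmem
  -- F zero on [M,∞)
  have hFzero : ∀ τ, M ≤ τ → F τ = 0 := by
    intro τ hτ
    apply Finset.sum_eq_zero
    intro u hu
    have hgu : τ < g u := (Finset.mem_filter.1 hu).2
    by_contra hne
    have hνu : 0 < ν u := lt_of_le_of_ne (hν0 u) (Ne.symm hne)
    have hus : u ∈ s := by simp [hsdef, hνu]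
    have : g u ≤ M := Finset.le_sup' g hus
    linarith
  -- layer cake
  have hlayer : (∫⁻ τ in Set.Ioi (0 : ℝ), ENNReal.ofReal (F τ)) = 1 := by
    have heq : ∀ τ, ENNReal.ofReal (F τ) =
        ∑ u, Set.indicator (Set.Iio (g u)) (fun _ => ENNReal.ofReal (ν u)) τ := by
      intro τ
      rw [hFdef]
      simp only [Finset.sum_filter]
      rw [ENNReal.ofReal_sum_of_nonneg (fun u _ => by split_ifs; exacts [hν0 u, le_refl 0])]
      refine Finset.sum_congr rfl (fun u _ => ?_)
      by_cases h : τ < g u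
      · rw [if_pos h, Set.indicator_of_mem (Set.mem_Iio.2 h)]
      · rw [if_neg h, Set.indicator_of_notMem (fun hmem => h (Set.mem_Iio.1 hmem))]
        simp
    simp_rw [heq]
    rw [lintegral_finset_sum _ (fun u _ => measurable_const.indicator measurableSet_Iio)]
    have hterm : ∀ u : U, (∫⁻ τ in Set.Ioi (0:ℝ),
        Set.indicator (Set.Iio (g u)) (fun _ => ENNReal.ofReal (ν u)) τ) =
        ENNReal.ofReal (ν u * g u) := by
      intro u
      rw [lintegral_indicator measurableSet_Iio, setLIntegral_const,
        Measure.restrict_apply measurableSet_Iio]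
      have : Set.Iio (g u) ∩ Set.Ioi (0:ℝ) = Set.Ioo 0 (g u) := by
        ext x; simp [Set.mem_Ioo, and_comm]
      rw [this, Real.volume_Ioo, sub_zero, ← ENNReal.ofReal_mul (hν0 u)]
    simp_rw [hterm]
    rw [← ENNReal.ofReal_sum_of_nonneg (fun u _ => mul_nonneg (hν0 u) (hg0 u)), hg1]
    simp
  -- combined integral of B + I
  have hBIint : (∫⁻ τ in Set.Ioi (0 : ℝ), ENNReal.ofReal (B τ + I τ)) ≤
      ENNReal.ofReal (G₀ + J₀) := by
    have : ∀ τ, ENNReal.ofReal (B τ + I τ) = ENNReal.ofReal (B τ) + ENNReal.ofReal (I τ) :=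
      fun τ => ENNReal.ofReal_add (hB0 τ) (hI0 τ)
    simp_rw [this]
    rw [lintegral_add_left hBm.ennreal_ofReal, ENNReal.ofReal_add hG₀ hJ₀]
    exact add_le_add hBint hIint
  exact stmt19_aux F B I M (G₀ + J₀) hM0 (by linarith) hBm hIm hB0 hI0 hFnn hlayer hFzero
    hBIint (fun τ hτ => hcon' τ hτ.1 (hFpos τ hτ))
end
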